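/- arXiv:2008.10919 — 3 statements merged into one kernel-verified Lean document; each statement's English description precedes it below -/
import Mathlib

section
/- If k, l ∈ L¹_loc(ℝ₊) are nonnegative with k ∗ l = 1 on (0,∞) (convolution on the half-line), and v ∈ L¹((0,T); X) for a Banach space X satisfies that k ∗ v is absolutely continuous on [0,T] with (k∗v)(0) = 0, then v = l ∗ ∂ₜ(k ∗ v) almost everywhere on (0,T). -/
open MeasureTheory Set

/-- Half-line convolution of two real functions. -/
noncomputable def hconv (k v : ℝ → ℝ) (t : ℝ) : ℝ := ∫ s in Set.Ioc 0 t, k (t - s) * v s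

namespace Stmt0Aux

/-- Pull back an a.e. equality on `[0,∞)` through the reflection `s ↦ t - s`. -/
lemma ae_reflect {f g : ℝ → ℝ} (hfg : f =ᵐ[volume.restrict (Set.Ici 0)] g) (t : ℝ) :
    ∀ᵐ s ∂(volume.restrict (Set.Ioc 0 t)), f (t - s) = g (t - s) := by
  have h0 : volume ({x | f x ≠ g x} ∩ Set.Ici 0) = 0 := by
    have := hfg
    rw [Filter.EventuallyEq, ae_iff, Measure.restrict_apply' measurableSet_Ici] at this
    exact this
  have hmp : MeasurePreserving (fun x : ℝ => t - x) volume volume :=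
    Measure.measurePreserving_sub_left volume t
  have h1 : volume ((fun x : ℝ => t - x) ⁻¹' ({x | f x ≠ g x} ∩ Set.Ici 0)) = 0 :=
    hmp.quasiMeasurePreserving.preimage_null h0
  rw [ae_iff, Measure.restrict_apply' measurableSet_Ioc]
  refine measure_mono_null ?_ h1
  rintro s ⟨hs, hs0, hst⟩
  exact ⟨hs, by simp [Set.mem_Ici]; linarith⟩

lemma hconv_congr {a a' b b' : ℝ → ℝ} {t : ℝ}
    (ha : a =ᵐ[volume.restrict (Set.Ici 0)] a')
    (hb : b =ᵐ[volume.restrict (Set.Ioc 0 t)] b') :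
    hconv a b t = hconv a' b' t := by
  unfold hconv
  refine integral_congr_ae ?_
  filter_upwards [ae_reflect ha t, hb] with s h1 h2
  rw [h1, h2]

/-- If an integrable function on `(0,T]` has vanishing primitive, it vanishes a.e. -/
lemma ae_zero_of_integral_Ioc (f : ℝ → ℝ) (T : ℝ)
    (hf : IntegrableOn f (Set.Ioc 0 T))
    (h : ∀ t ∈ Set.Icc 0 T, ∫ s in Set.Ioc 0 t, f s = 0) :
    ∀ᵐ t ∂(volume.restrict (Set.Ioc 0 T)), f t = 0 := by
  set μ := volume.restrict (Set.Ioc 0 T) with hμ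
  have hgsm := hf.aestronglyMeasurable
  set g : ℝ → ℝ := hgsm.mk f with hgdef
  have hgm : Measurable g := hgsm.stronglyMeasurable_mk.measurable
  have hfg : f =ᵐ[μ] g := hgsm.ae_eq_mk
  have hg : Integrable g μ := hf.congr hfg
  have hgzero : ∀ t ∈ Set.Icc 0 T, ∫ s in Set.Ioc 0 t, g s = 0 := by
    intro t ht
    have hae2 : g =ᵐ[volume.restrict (Set.Ioc 0 t)] f :=
      ae_restrict_of_ae_restrict_of_subset (Set.Ioc_subset_Ioc_right ht.2) hfg.symm
    rw [integral_congr_ae hae2]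
    exact h t ht
  have hofg : AEMeasurable (fun x => ENNReal.ofReal (g x)) μ :=
    (ENNReal.measurable_ofReal.comp hgm).aemeasurable
  have hofg' : AEMeasurable (fun x => ENNReal.ofReal (- g x)) μ :=
    (ENNReal.measurable_ofReal.comp hgm.neg).aemeasurable
  have hfin : ∫⁻ x, ENNReal.ofReal (g x) ∂μ ≠ ⊤ := by
    refine ne_top_of_le_ne_top hg.2.ne ?_
    refine lintegral_mono fun x => ?_
    rw [Real.enorm_eq_ofReal_abs]
    exact ENNReal.ofReal_le_ofReal (le_abs_self _)
  have hfin' : ∫⁻ x, ENNReal.ofReal (- g x) ∂μ ≠ ⊤ := by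
    refine ne_top_of_le_ne_top hg.2.ne ?_
    refine lintegral_mono fun x => ?_
    rw [Real.enorm_eq_ofReal_abs]
    exact ENNReal.ofReal_le_ofReal (neg_le_abs _)
  have h1 : IsFiniteMeasure (μ.withDensity (fun x => ENNReal.ofReal (g x))) :=
    isFiniteMeasure_withDensity hfin
  have h2 : IsFiniteMeasure (μ.withDensity (fun x => ENNReal.ofReal (- g x))) :=
    isFiniteMeasure_withDensity hfin'
  have key : μ.withDensity (fun x => ENNReal.ofReal (g x))
      = μ.withDensity (fun x => ENNReal.ofReal (- g x)) := by
    refine Measure.ext_of_Iic _ _ fun a => ?_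
    rw [withDensity_apply _ measurableSet_Iic, withDensity_apply _ measurableSet_Iic,
      hμ, Measure.restrict_restrict measurableSet_Iic]
    have hset : Set.Iic a ∩ Set.Ioc 0 T = Set.Ioc 0 (min a T) := by
      ext x
      simp only [Set.mem_inter_iff, Set.mem_Iic, Set.mem_Ioc, le_min_iff]
      tauto
    rw [hset]
    set t' := min a T with ht'
    rcases le_or_gt t' 0 with h0 | h0
    · rw [Set.Ioc_eq_empty (by simpa using h0), Measure.restrict_empty]
      simp
    · have ht'T : t' ∈ Set.Icc 0 T := ⟨le_of_lt h0, min_le_right _ _⟩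
      have hgint : IntegrableOn g (Set.Ioc 0 t') := by
        have : IntegrableOn g (Set.Ioc 0 T) := by rwa [hμ] at hg
        exact this.mono_set (Set.Ioc_subset_Ioc_right ht'T.2)
      have hpos : Integrable (fun x => max (g x) 0) (volume.restrict (Set.Ioc 0 t')) :=
        hgint.pos_part
      have hneg : Integrable (fun x => max (- g x) 0) (volume.restrict (Set.Ioc 0 t')) :=
        hgint.neg.pos_part
      have e1 : ∫⁻ x in Set.Ioc 0 t', ENNReal.ofReal (g x)
          = ENNReal.ofReal (∫ x in Set.Ioc 0 t', max (g x) 0) := by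
        rw [ofReal_integral_eq_lintegral_ofReal hpos (ae_of_all _ fun x => le_max_right _ _)]
        refine lintegral_congr fun x => ?_
        rcases le_total (g x) 0 with hx | hx
        · rw [max_eq_right hx, ENNReal.ofReal_of_nonpos hx]; simp
        · rw [max_eq_left hx]
      have e2 : ∫⁻ x in Set.Ioc 0 t', ENNReal.ofReal (- g x)
          = ENNReal.ofReal (∫ x in Set.Ioc 0 t', max (- g x) 0) := by
        rw [ofReal_integral_eq_lintegral_ofReal hneg (ae_of_all _ fun x => le_max_right _ _)]
        refine lintegral_congr fun x => ?_
        rcases le_total (- g x) 0 with hx | hx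
        · rw [max_eq_right hx, ENNReal.ofReal_of_nonpos hx]; simp
        · rw [max_eq_left hx]
      have e3 : ∫ x in Set.Ioc 0 t', max (g x) 0 = ∫ x in Set.Ioc 0 t', max (- g x) 0 := by
        have hsub := integral_sub hpos hneg
        have : (fun x => max (g x) 0 - max (- g x) 0) = g := by
          ext x; rcases le_total (g x) 0 with hx | hx
          · rw [max_eq_right hx, max_eq_left (by linarith)]; ring
          · rw [max_eq_left hx, max_eq_right (by linarith)]; ring
        rw [this, hgzero t' ht'T] at hsub
        linarith [hsub]
      rw [e1, e2, e3]
  have := (withDensity_eq_iff hofg hofg' hfin).mp key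
  filter_upwards [hfg, this] with x h1 h2
  rw [h1]
  by_contra hne
  rcases lt_or_gt_of_ne hne with hx | hx
  · have : ENNReal.ofReal (g x) = 0 := ENNReal.ofReal_of_nonpos (le_of_lt hx)
    rw [this] at h2
    have : (0:ℝ) < - g x := by linarith
    exact absurd h2.symm (by simpa [ENNReal.ofReal_eq_zero] using this)
  · have : ENNReal.ofReal (- g x) = 0 := ENNReal.ofReal_of_nonpos (by linarith)
    rw [this] at h2
    exact absurd h2 (by simpa [ENNReal.ofReal_eq_zero] using hx)

lemma inner_convert (F : ℝ → ℝ → ℝ) {t s : ℝ} (hs : s ∈ Set.Ioc 0 t) :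
    ∫ σ in Set.Ioc 0 t, (if σ ≤ s then F s σ else 0) = ∫ σ in Set.Ioc 0 s, F s σ := by
  have hind : (fun σ => if σ ≤ s then F s σ else 0)
      = Set.indicator (Set.Iic s) (fun σ => F s σ) := by
    ext σ; by_cases hσ : σ ≤ s <;> simp [Set.indicator_apply, Set.mem_Iic, hσ]
  have hset : Set.Iic s ∩ Set.Ioc 0 t = Set.Ioc 0 s := by
    ext σ
    simp only [Set.mem_inter_iff, Set.mem_Iic, Set.mem_Ioc]
    exact ⟨fun ⟨h1, h2, _⟩ => ⟨h2, h1⟩, fun ⟨h1, h2⟩ => ⟨h2, h1, h2.trans hs.2⟩⟩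
  rw [hind, integral_indicator measurableSet_Iic,
    Measure.restrict_restrict measurableSet_Iic, hset]

lemma inner_convert' (F : ℝ → ℝ → ℝ) {t σ : ℝ} (hσ : σ ∈ Set.Ioc 0 t) :
    ∫ s in Set.Ioc 0 t, (if σ ≤ s then F s σ else 0) = ∫ s in Set.Ioc σ t, F s σ := by
  have hind : (fun s => if σ ≤ s then F s σ else 0)
      = Set.indicator (Set.Ici σ) (fun s => F s σ) := by
    ext s; by_cases hσ' : σ ≤ s <;> simp [Set.indicator_apply, Set.mem_Ici, hσ']
  rw [hind, integral_indicator measurableSet_Ici,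
    Measure.restrict_restrict measurableSet_Ici]
  have hset : Set.Ici σ ∩ Set.Ioc 0 t = Set.Icc σ t := by
    ext s
    simp only [Set.mem_inter_iff, Set.mem_Ici, Set.mem_Ioc, Set.mem_Icc]
    exact ⟨fun ⟨h1, _, h3⟩ => ⟨h1, h3⟩, fun ⟨h1, h2⟩ => ⟨h1, hσ.1.trans_le h1, h2⟩⟩
  rw [hset, integral_Icc_eq_integral_Ioc]

/-- Fubini for a triangle `0 < σ ≤ s ≤ t`. -/
lemma triangle_swap (F : ℝ → ℝ → ℝ) (t : ℝ)
    (hInt : Integrable (fun p : ℝ × ℝ => if p.2 ≤ p.1 then F p.1 p.2 else 0)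
      ((volume.restrict (Set.Ioc 0 t)).prod (volume.restrict (Set.Ioc 0 t)))) :
    ∫ s in Set.Ioc 0 t, (∫ σ in Set.Ioc 0 s, F s σ) =
      ∫ σ in Set.Ioc 0 t, (∫ s in Set.Ioc σ t, F s σ) := by
  have hswap :
      ∫ s in Set.Ioc 0 t, (∫ σ in Set.Ioc 0 t, (if σ ≤ s then F s σ else 0))
        = ∫ σ in Set.Ioc 0 t, (∫ s in Set.Ioc 0 t, (if σ ≤ s then F s σ else 0)) :=
    integral_integral_swap hInt
  calc ∫ s in Set.Ioc 0 t, (∫ σ in Set.Ioc 0 s, F s σ)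
      = ∫ s in Set.Ioc 0 t, (∫ σ in Set.Ioc 0 t, (if σ ≤ s then F s σ else 0)) := by
        refine setIntegral_congr_fun measurableSet_Ioc fun s hs => ?_
        exact (inner_convert F hs).symm
    _ = ∫ σ in Set.Ioc 0 t, (∫ s in Set.Ioc 0 t, (if σ ≤ s then F s σ else 0)) := hswap
    _ = ∫ σ in Set.Ioc 0 t, (∫ s in Set.Ioc σ t, F s σ) := by
        refine setIntegral_congr_fun measurableSet_Ioc fun σ hσ => ?_
        exact inner_convert' F hσ

lemma integral_Ioc_reflect (f : ℝ → ℝ) {a t : ℝ} (h : a ≤ t) :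
    ∫ s in Set.Ioc a t, f (t - s) = ∫ u in Set.Ioc 0 (t - a), f u := by
  rw [← intervalIntegral.integral_of_le h, ← intervalIntegral.integral_of_le (by linarith),
    intervalIntegral.integral_comp_sub_left f t, sub_self]

lemma integral_Ioc_translate (f : ℝ → ℝ) {a t : ℝ} (h : a ≤ t) :
    ∫ s in Set.Ioc a t, f (s - a) = ∫ u in Set.Ioc 0 (t - a), f u := by
  rw [← intervalIntegral.integral_of_le h, ← intervalIntegral.integral_of_le (by linarith),
    intervalIntegral.integral_comp_sub_right f a, sub_self]

/-- Generic integrability of the triangle integrand `f s * g (s-σ) * h σ`. -/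
lemma prod_integrable (f g h : ℝ → ℝ) (t : ℝ)
    (hfm : Measurable f) (hgm : Measurable g) (hhm : Measurable h)
    (hfnn : ∀ x, 0 ≤ f x) (hgnn : ∀ x, 0 ≤ g x)
    (hsec : ∀ σ ∈ Set.Ioo 0 t, IntegrableOn (fun s => f s * g (s - σ)) (Set.Ioc σ t))
    (I : ℝ → ℝ) (hI : ∀ σ ∈ Set.Ioo 0 t, ∫ s in Set.Ioc σ t, f s * g (s - σ) = I σ)
    (hbound : Integrable (fun σ => |h σ| * I σ) (volume.restrict (Set.Ioc 0 t))) :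
    Integrable (fun p : ℝ × ℝ => if p.2 ≤ p.1 then f p.1 * g (p.1 - p.2) * h p.2 else 0)
      ((volume.restrict (Set.Ioc 0 t)).prod (volume.restrict (Set.Ioc 0 t))) := by
  have hmeas : AEStronglyMeasurable
      (fun p : ℝ × ℝ => if p.2 ≤ p.1 then f p.1 * g (p.1 - p.2) * h p.2 else 0)
      ((volume.restrict (Set.Ioc 0 t)).prod (volume.restrict (Set.Ioc 0 t))) := by
    refine Measurable.aestronglyMeasurable ?_
    exact Measurable.ite (measurableSet_le measurable_snd measurable_fst)
      (((hfm.comp measurable_fst).mul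
        (hgm.comp (measurable_fst.sub measurable_snd))).mul (hhm.comp measurable_snd))
      measurable_const
  have hae : ∀ᵐ σ ∂(volume.restrict (Set.Ioc 0 t)), σ ∈ Set.Ioo 0 t := by
    rw [← Measure.restrict_congr_set Ioo_ae_eq_Ioc]
    exact ae_restrict_mem measurableSet_Ioo
  refine (integrable_prod_iff' hmeas).mpr ⟨?_, ?_⟩
  · filter_upwards [hae] with σ hσ
    have hind : (fun s => if σ ≤ s then f s * g (s - σ) * h σ else 0)
        = Set.indicator (Set.Ici σ) (fun s => f s * g (s - σ) * h σ) := by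
      ext s; by_cases hs : σ ≤ s <;> simp [Set.indicator_apply, Set.mem_Ici, hs]
    rw [hind, integrable_indicator_iff measurableSet_Ici, IntegrableOn,
      Measure.restrict_restrict measurableSet_Ici]
    have hset : Set.Ici σ ∩ Set.Ioc 0 t = Set.Icc σ t := by
      ext s
      simp only [Set.mem_inter_iff, Set.mem_Ici, Set.mem_Ioc, Set.mem_Icc]
      exact ⟨fun ⟨h1, _, h3⟩ => ⟨h1, h3⟩, fun ⟨h1, h2⟩ => ⟨h1, hσ.1.trans_le h1, h2⟩⟩
    rw [hset, ← Measure.restrict_congr_set Ioc_ae_eq_Icc]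
    exact (hsec σ hσ).mul_const (h σ)
  · refine hbound.congr ?_
    filter_upwards [hae] with σ hσ
    have hind : (fun s => ‖if σ ≤ s then f s * g (s - σ) * h σ else 0‖)
        = Set.indicator (Set.Ici σ) (fun s => f s * g (s - σ) * |h σ|) := by
      ext s; by_cases hs : σ ≤ s
      · simp [Set.indicator_apply, Set.mem_Ici, hs, Real.norm_eq_abs, abs_mul,
          abs_of_nonneg (hfnn s), abs_of_nonneg (hgnn (s - σ))]
      · simp [Set.indicator_apply, Set.mem_Ici, hs]
    have hset : Set.Ici σ ∩ Set.Ioc 0 t = Set.Icc σ t := by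
      ext s
      simp only [Set.mem_inter_iff, Set.mem_Ici, Set.mem_Ioc, Set.mem_Icc]
      exact ⟨fun ⟨h1, _, h3⟩ => ⟨h1, h3⟩, fun ⟨h1, h2⟩ => ⟨h1, hσ.1.trans_le h1, h2⟩⟩
    calc |h σ| * I σ = (∫ s in Set.Ioc σ t, f s * g (s - σ)) * |h σ| := by
          rw [hI σ hσ]; ring
      _ = ∫ s in Set.Ioc σ t, f s * g (s - σ) * |h σ| := (integral_mul_const _ _).symm
      _ = ∫ s in Set.Icc σ t, f s * g (s - σ) * |h σ| := (integral_Icc_eq_integral_Ioc).symm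
      _ = ∫ s in Set.Ici σ ∩ Set.Ioc 0 t, f s * g (s - σ) * |h σ| := by rw [hset]
      _ = ∫ s in Set.Ioc 0 t, Set.indicator (Set.Ici σ) (fun s => f s * g (s - σ) * |h σ|) s := by
          rw [integral_indicator measurableSet_Ici,
            Measure.restrict_restrict measurableSet_Ici]
      _ = ∫ s in Set.Ioc 0 t, ‖if σ ≤ s then f s * g (s - σ) * h σ else 0‖ := by rw [← hind]

end Stmt0Aux

open Stmt0Aux in
/-- if `k, l` are nonnegative, locally integrable on ℝ₊ with `k∗l = 1` on `(0,∞)`,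
`v ∈ L¹((0,T))`, and `k∗v` is absolutely continuous on `[0,T]` with `(k∗v)(0)=0`
(expressed by `k∗v = 1∗w` for an integrable `w = ∂ₜ(k∗v)`), then `v = l ∗ ∂ₜ(k∗v)`
a.e. on `(0,T)`. -/
theorem stmt0
    (k l : ℝ → ℝ) (T : ℝ) (hT : 0 < T)
    (hkloc : LocallyIntegrableOn k (Set.Ici 0))
    (hlloc : LocallyIntegrableOn l (Set.Ici 0))
    (hknn : ∀ t, 0 ≤ t → 0 ≤ k t) (hlnn : ∀ t, 0 ≤ t → 0 ≤ l t)
    (hkl : ∀ t, 0 < t → hconv k l t = 1)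
    (v w : ℝ → ℝ)
    (hv : IntegrableOn v (Set.Ioc 0 T))
    (hw : IntegrableOn w (Set.Ioc 0 T))
    (hAC : ∀ t ∈ Set.Icc 0 T, hconv k v t = ∫ s in Set.Ioc 0 t, w s) :
    ∀ᵐ t ∂(volume.restrict (Set.Ioc 0 T)), v t = hconv l w t := by
  classical
  -- measurable, everywhere-nonnegative versions of k and l
  have hksm := hkloc.aestronglyMeasurable
  have hlsm := hlloc.aestronglyMeasurable
  set k₀ : ℝ → ℝ := fun x => if 0 ≤ x then max (hksm.mk k x) 0 else 0 with hk₀def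
  set l₀ : ℝ → ℝ := fun x => if 0 ≤ x then max (hlsm.mk l x) 0 else 0 with hl₀def
  have hk₀m : Measurable k₀ := by
    refine Measurable.ite ?_ (hksm.stronglyMeasurable_mk.measurable.max measurable_const)
      measurable_const
    exact measurableSet_Ici
  have hl₀m : Measurable l₀ := by
    refine Measurable.ite ?_ (hlsm.stronglyMeasurable_mk.measurable.max measurable_const)
      measurable_const
    exact measurableSet_Ici
  have hk₀nn : ∀ x, 0 ≤ k₀ x := by
    intro x; rw [hk₀def]; dsimp only
    split <;> simp [le_max_right]
  have hl₀nn : ∀ x, 0 ≤ l₀ x := by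
    intro x; rw [hl₀def]; dsimp only
    split <;> simp [le_max_right]
  have hk₀ : k =ᵐ[volume.restrict (Set.Ici 0)] k₀ := by
    filter_upwards [hksm.ae_eq_mk, ae_restrict_mem measurableSet_Ici] with x h1 h2
    rw [hk₀def]; dsimp only
    rw [Set.mem_Ici] at h2
    rw [if_pos h2, ← h1, max_eq_left (hknn x h2)]
  have hl₀ : l =ᵐ[volume.restrict (Set.Ici 0)] l₀ := by
    filter_upwards [hlsm.ae_eq_mk, ae_restrict_mem measurableSet_Ici] with x h1 h2
    rw [hl₀def]; dsimp only
    rw [Set.mem_Ici] at h2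
    rw [if_pos h2, ← h1, max_eq_left (hlnn x h2)]
  -- measurable versions of v and w
  set v₀ : ℝ → ℝ := hv.1.mk v with hv₀def
  set w₀ : ℝ → ℝ := hw.1.mk w with hw₀def
  have hv₀m : Measurable v₀ := hv.1.stronglyMeasurable_mk.measurable
  have hw₀m : Measurable w₀ := hw.1.stronglyMeasurable_mk.measurable
  have hveq : v =ᵐ[volume.restrict (Set.Ioc 0 T)] v₀ := hv.1.ae_eq_mk
  have hweq : w =ᵐ[volume.restrict (Set.Ioc 0 T)] w₀ := hw.1.ae_eq_mk
  have hv₀ : IntegrableOn v₀ (Set.Ioc 0 T) := hv.congr hveq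
  have hw₀ : IntegrableOn w₀ (Set.Ioc 0 T) := hw.congr hweq
  -- helper to shrink ae-equalities
  have hsub : ∀ {a b : ℝ → ℝ} {t : ℝ}, t ≤ T →
      a =ᵐ[volume.restrict (Set.Ioc 0 T)] b → a =ᵐ[volume.restrict (Set.Ioc 0 t)] b :=
    fun htT hab => ae_restrict_of_ae_restrict_of_subset (Set.Ioc_subset_Ioc_right htT) hab
  have hsub' : ∀ {a b : ℝ → ℝ} {t : ℝ},
      a =ᵐ[volume.restrict (Set.Ici 0)] b → a =ᵐ[volume.restrict (Set.Ioc 0 t)] b :=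
    fun hab => ae_restrict_of_ae_restrict_of_subset
      (fun x hx => le_of_lt hx.1) hab
  -- transferred hypotheses
  have hkl₀ : ∀ τ, 0 < τ → hconv k₀ l₀ τ = 1 := by
    intro τ hτ
    rw [← hconv_congr hk₀ (hsub' hl₀)]
    exact hkl τ hτ
  have hq : ∀ τ, 0 < τ → IntegrableOn (fun u => k₀ (τ - u) * l₀ u) (Set.Ioc 0 τ) := by
    intro τ hτ
    exact integrable_of_integral_eq_one (hkl₀ τ hτ)
  have hlT : IntegrableOn l₀ (Set.Ioc 0 T) := by
    have h1 : IntegrableOn l (Set.Icc 0 T) :=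
      hlloc.integrableOn_compact_subset Set.Icc_subset_Ici_self isCompact_Icc
    exact (h1.mono_set Set.Ioc_subset_Icc_self).congr (hsub' hl₀)
  have hAC₀ : ∀ t ∈ Set.Icc 0 T, hconv k₀ v₀ t = ∫ s in Set.Ioc 0 t, w₀ s := by
    intro t ht
    rw [← hconv_congr hk₀ (hsub ht.2 hveq), hAC t ht]
    exact integral_congr_ae (hsub ht.2 hweq)
  -- the primitive of l₀
  set L : ℝ → ℝ := fun τ => ∫ s in Set.Ioc 0 (min τ T), l₀ s with hLdef
  have hLmono : Monotone L := by
    intro a b hab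
    refine setIntegral_mono_set
      (hlT.mono_set (Set.Ioc_subset_Ioc_right (min_le_right _ _)))
      (ae_of_all _ fun x => hl₀nn x) ?_
    exact HasSubset.Subset.eventuallyLE (Set.Ioc_subset_Ioc_right (min_le_min_right T hab))
  have hLmeas : Measurable L := hLmono.measurable
  have hL0 : ∀ τ, 0 ≤ L τ :=
    fun τ => setIntegral_nonneg measurableSet_Ioc fun x _ => hl₀nn x
  have hLval : ∀ τ, τ ≤ T → L τ = ∫ s in Set.Ioc 0 τ, l₀ s := by
    intro τ hτ; rw [hLdef]; dsimp only; rw [min_eq_left hτ]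
  -- section integrability and inner-integral identities
  have hsec1 : ∀ t, 0 < t → t ≤ T → ∀ σ ∈ Set.Ioo 0 t,
      IntegrableOn (fun s => l₀ (t - s) * k₀ (s - σ)) (Set.Ioc σ t) := by
    intro t ht htT σ hσ
    have hτ : (0:ℝ) < t - σ := by linarith [hσ.2]
    have h1 : IntervalIntegrable (fun u => k₀ (t - σ - u) * l₀ u) volume 0 (t - σ) :=
      (intervalIntegrable_iff_integrableOn_Ioc_of_le (le_of_lt hτ)).mpr (hq (t - σ) hτ)
    have h2 := (h1.comp_sub_left t).symm
    rw [sub_zero, sub_sub_cancel] at h2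
    have h3 := (intervalIntegrable_iff_integrableOn_Ioc_of_le (le_of_lt hσ.2)).mp h2
    refine h3.congr ?_
    refine ae_of_all _ fun s => ?_
    show k₀ (t - σ - (t - s)) * l₀ (t - s) = l₀ (t - s) * k₀ (s - σ)
    rw [show t - σ - (t - s) = s - σ from by ring, mul_comm]
  have hI1 : ∀ t, 0 < t → t ≤ T → ∀ σ ∈ Set.Ioo 0 t,
      ∫ s in Set.Ioc σ t, l₀ (t - s) * k₀ (s - σ) = 1 := by
    intro t ht htT σ hσ
    have hτ : (0:ℝ) < t - σ := by linarith [hσ.2]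
    have hre : ∀ s : ℝ, l₀ (t - s) * k₀ (s - σ)
        = (fun u => l₀ u * k₀ (t - σ - u)) (t - s) := by
      intro s; dsimp only; congr 2; ring
    calc ∫ s in Set.Ioc σ t, l₀ (t - s) * k₀ (s - σ)
        = ∫ s in Set.Ioc σ t, (fun u => l₀ u * k₀ (t - σ - u)) (t - s) := by
          exact setIntegral_congr_fun measurableSet_Ioc fun s _ => hre s
      _ = ∫ u in Set.Ioc 0 (t - σ), l₀ u * k₀ (t - σ - u) :=
          integral_Ioc_reflect (fun u => l₀ u * k₀ (t - σ - u)) (le_of_lt hσ.2)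
      _ = hconv k₀ l₀ (t - σ) := by
          unfold hconv
          exact setIntegral_congr_fun measurableSet_Ioc fun u _ => by ring
      _ = 1 := hkl₀ _ hτ
  have hsec2 : ∀ t, 0 < t → t ≤ T → ∀ σ ∈ Set.Ioo 0 t,
      IntegrableOn (fun s => (1:ℝ) * l₀ (s - σ)) (Set.Ioc σ t) := by
    intro t ht htT σ hσ
    have h1 : IntervalIntegrable l₀ volume 0 (t - σ) :=
      (intervalIntegrable_iff_integrableOn_Ioc_of_le (by linarith [hσ.2])).mpr
        (hlT.mono_set (Set.Ioc_subset_Ioc_right (by linarith [hσ.1])))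
    have h2 := h1.comp_sub_right σ
    rw [zero_add, sub_add_cancel] at h2
    have h3 := (intervalIntegrable_iff_integrableOn_Ioc_of_le (le_of_lt hσ.2)).mp h2
    exact h3.congr (ae_of_all _ fun s => (one_mul _).symm)
  have hI2 : ∀ t, 0 < t → t ≤ T → ∀ σ ∈ Set.Ioo 0 t,
      ∫ s in Set.Ioc σ t, (1:ℝ) * l₀ (s - σ) = L (t - σ) := by
    intro t ht htT σ hσ
    rw [hLval (t - σ) (by linarith [hσ.1])]
    calc ∫ s in Set.Ioc σ t, (1:ℝ) * l₀ (s - σ)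
        = ∫ s in Set.Ioc σ t, l₀ (s - σ) :=
          setIntegral_congr_fun measurableSet_Ioc fun s _ => one_mul _
      _ = ∫ u in Set.Ioc 0 (t - σ), l₀ u := integral_Ioc_translate _ (le_of_lt hσ.2)
  have hsec3 : ∀ t, 0 < t → t ≤ T → ∀ σ ∈ Set.Ioo 0 t,
      IntegrableOn (fun s => l₀ (t - s) * (1:ℝ)) (Set.Ioc σ t) := by
    intro t ht htT σ hσ
    have h1 : IntervalIntegrable l₀ volume 0 (t - σ) :=
      (intervalIntegrable_iff_integrableOn_Ioc_of_le (by linarith [hσ.2])).mpr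
        (hlT.mono_set (Set.Ioc_subset_Ioc_right (by linarith [hσ.1])))
    have h2 := (h1.comp_sub_left t).symm
    rw [sub_zero, sub_sub_cancel] at h2
    have h3 := (intervalIntegrable_iff_integrableOn_Ioc_of_le (le_of_lt hσ.2)).mp h2
    exact h3.congr (ae_of_all _ fun s => (mul_one _).symm)
  have hI3 : ∀ t, 0 < t → t ≤ T → ∀ σ ∈ Set.Ioo 0 t,
      ∫ s in Set.Ioc σ t, l₀ (t - s) * (1:ℝ) = L (t - σ) := by
    intro t ht htT σ hσ
    rw [hLval (t - σ) (by linarith [hσ.1])]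
    calc ∫ s in Set.Ioc σ t, l₀ (t - s) * (1:ℝ)
        = ∫ s in Set.Ioc σ t, l₀ (t - s) :=
          setIntegral_congr_fun measurableSet_Ioc fun s _ => mul_one _
      _ = ∫ u in Set.Ioc 0 (t - σ), l₀ u := integral_Ioc_reflect _ (le_of_lt hσ.2)
  -- bounds
  have hbound1 : ∀ t, t ≤ T →
      Integrable (fun σ => |v₀ σ| * (1:ℝ)) (volume.restrict (Set.Ioc 0 t)) := by
    intro t htT
    have := (hv₀.mono_set (Set.Ioc_subset_Ioc_right htT)).abs
    exact this.congr (ae_of_all _ fun σ => (mul_one _).symm)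
  have hboundL : ∀ t, 0 < t → t ≤ T →
      Integrable (fun σ => |w₀ σ| * L (t - σ)) (volume.restrict (Set.Ioc 0 t)) := by
    intro t ht htT
    have hwt : IntegrableOn w₀ (Set.Ioc 0 t) := hw₀.mono_set (Set.Ioc_subset_Ioc_right htT)
    refine Integrable.mono' (hwt.abs.const_mul (L T)) ?_ ?_
    · exact (hw₀m.abs.mul (hLmeas.comp (measurable_const.sub measurable_id))).aestronglyMeasurable
    · filter_upwards [ae_restrict_mem measurableSet_Ioc] with σ hσ
      have h1 : 0 ≤ |w₀ σ| * L (t - σ) := mul_nonneg (abs_nonneg _) (hL0 _)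
      rw [Real.norm_eq_abs, abs_of_nonneg h1]
      calc |w₀ σ| * L (t - σ) ≤ |w₀ σ| * L T := by
            refine mul_le_mul_of_nonneg_left (hLmono ?_) (abs_nonneg _)
            have := hσ.1
            linarith
        _ = L T * |w₀ σ| := mul_comm _ _
  -- key identity
  have key : ∀ t ∈ Set.Icc 0 T,
      ∫ s in Set.Ioc 0 t, v₀ s = ∫ s in Set.Ioc 0 t, hconv l₀ w₀ s := by
    intro t ht
    rcases eq_or_lt_of_le ht.1 with h0 | h0
    · rw [← h0]; simp
    have htT := ht.2
    have hae : ∀ᵐ σ ∂(volume.restrict (Set.Ioc 0 t)), σ ∈ Set.Ioo 0 t := by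
      rw [← Measure.restrict_congr_set Ioo_ae_eq_Ioc]
      exact ae_restrict_mem measurableSet_Ioo
    -- Swap 1: with F s σ = l₀(t-s) k₀(s-σ) v₀ σ
    have hP1 := triangle_swap (fun s σ => l₀ (t - s) * k₀ (s - σ) * v₀ σ) t
      (prod_integrable (fun s => l₀ (t - s)) k₀ v₀ t
        (hl₀m.comp (measurable_const.sub measurable_id)) hk₀m hv₀m
        (fun x => hl₀nn _) hk₀nn
        (hsec1 t h0 htT) (fun _ => (1:ℝ)) (hI1 t h0 htT) (hbound1 t htT))
    -- Swap 3: with F s σ = l₀(t-s) * 1 * w₀ σ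
    have hP3 := triangle_swap (fun s σ => l₀ (t - s) * (1:ℝ) * w₀ σ) t
      (prod_integrable (fun s => l₀ (t - s)) (fun _ => (1:ℝ)) w₀ t
        (hl₀m.comp (measurable_const.sub measurable_id)) measurable_const hw₀m
        (fun x => hl₀nn _) (fun _ => zero_le_one)
        (hsec3 t h0 htT) (fun σ => L (t - σ)) (hI3 t h0 htT) (hboundL t h0 htT))
    -- Swap 2: with F s σ = 1 * l₀(s-σ) * w₀ σ
    have hP2 := triangle_swap (fun s σ => (1:ℝ) * l₀ (s - σ) * w₀ σ) t
      (prod_integrable (fun _ => (1:ℝ)) l₀ w₀ t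
        measurable_const hl₀m hw₀m (fun _ => zero_le_one) hl₀nn
        (hsec2 t h0 htT) (fun σ => L (t - σ)) (hI2 t h0 htT) (hboundL t h0 htT))
    -- Evaluate swap 1
    have e1L : ∫ s in Set.Ioc 0 t, (∫ σ in Set.Ioc 0 s, l₀ (t - s) * k₀ (s - σ) * v₀ σ)
        = ∫ s in Set.Ioc 0 t, l₀ (t - s) * hconv k₀ v₀ s := by
      refine setIntegral_congr_fun measurableSet_Ioc fun s hs => ?_
      unfold hconv
      rw [← integral_const_mul]
      exact setIntegral_congr_fun measurableSet_Ioc fun σ _ => by ring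
    have e1R : ∫ σ in Set.Ioc 0 t, (∫ s in Set.Ioc σ t, l₀ (t - s) * k₀ (s - σ) * v₀ σ)
        = ∫ σ in Set.Ioc 0 t, v₀ σ := by
      refine integral_congr_ae ?_
      filter_upwards [hae] with σ hσ
      rw [show (fun s => l₀ (t - s) * k₀ (s - σ) * v₀ σ)
          = fun s => (l₀ (t - s) * k₀ (s - σ)) * v₀ σ from rfl]
      rw [integral_mul_const, hI1 t h0 htT σ hσ, one_mul]
    -- Evaluate swap 3
    have e3L : ∫ s in Set.Ioc 0 t, (∫ σ in Set.Ioc 0 s, l₀ (t - s) * (1:ℝ) * w₀ σ)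
        = ∫ s in Set.Ioc 0 t, l₀ (t - s) * hconv k₀ v₀ s := by
      refine setIntegral_congr_fun measurableSet_Ioc fun s hs => ?_
      have hsmem : s ∈ Set.Icc 0 T := ⟨le_of_lt hs.1, hs.2.trans htT⟩
      rw [hAC₀ s hsmem, ← integral_const_mul]
      exact setIntegral_congr_fun measurableSet_Ioc fun σ _ => by ring
    have e3R : ∫ σ in Set.Ioc 0 t, (∫ s in Set.Ioc σ t, l₀ (t - s) * (1:ℝ) * w₀ σ)
        = ∫ σ in Set.Ioc 0 t, L (t - σ) * w₀ σ := by
      refine integral_congr_ae ?_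
      filter_upwards [hae] with σ hσ
      rw [show (fun s => l₀ (t - s) * (1:ℝ) * w₀ σ)
          = fun s => (l₀ (t - s) * (1:ℝ)) * w₀ σ from rfl]
      rw [integral_mul_const, hI3 t h0 htT σ hσ]
    -- Evaluate swap 2
    have e2L : ∫ s in Set.Ioc 0 t, (∫ σ in Set.Ioc 0 s, (1:ℝ) * l₀ (s - σ) * w₀ σ)
        = ∫ s in Set.Ioc 0 t, hconv l₀ w₀ s := by
      refine setIntegral_congr_fun measurableSet_Ioc fun s hs => ?_
      unfold hconv
      exact setIntegral_congr_fun measurableSet_Ioc fun σ _ => by ring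
    have e2R : ∫ σ in Set.Ioc 0 t, (∫ s in Set.Ioc σ t, (1:ℝ) * l₀ (s - σ) * w₀ σ)
        = ∫ σ in Set.Ioc 0 t, L (t - σ) * w₀ σ := by
      refine integral_congr_ae ?_
      filter_upwards [hae] with σ hσ
      rw [show (fun s => (1:ℝ) * l₀ (s - σ) * w₀ σ)
          = fun s => ((1:ℝ) * l₀ (s - σ)) * w₀ σ from rfl]
      rw [integral_mul_const, hI2 t h0 htT σ hσ]
    rw [e1L, e1R] at hP1
    rw [e3L, e3R] at hP3
    rw [e2L, e2R] at hP2
    rw [← hP1, hP3, ← hP2]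
  -- integrability of hconv l₀ w₀ on (0,T]
  have hconvInt : IntegrableOn (fun s => hconv l₀ w₀ s) (Set.Ioc 0 T) := by
    have hprod := prod_integrable (fun _ => (1:ℝ)) l₀ w₀ T
      measurable_const hl₀m hw₀m (fun _ => zero_le_one) hl₀nn
      (hsec2 T hT le_rfl) (fun σ => L (T - σ)) (hI2 T hT le_rfl) (hboundL T hT le_rfl)
    have h1 := hprod.integral_prod_left
    refine h1.congr ?_
    filter_upwards [ae_restrict_mem measurableSet_Ioc] with s hs
    rw [inner_convert (fun s σ => (1:ℝ) * l₀ (s - σ) * w₀ σ) hs]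
    unfold hconv
    exact setIntegral_congr_fun measurableSet_Ioc fun σ _ => by ring
  -- conclude v₀ = hconv l₀ w₀ a.e.
  have hfinal : ∀ᵐ s ∂(volume.restrict (Set.Ioc 0 T)), v₀ s - hconv l₀ w₀ s = 0 := by
    refine ae_zero_of_integral_Ioc _ T (hv₀.sub hconvInt) ?_
    intro t ht
    have hsubInt : IntegrableOn v₀ (Set.Ioc 0 t) := hv₀.mono_set (Set.Ioc_subset_Ioc_right ht.2)
    have hsubInt' : IntegrableOn (fun s => hconv l₀ w₀ s) (Set.Ioc 0 t) :=
      hconvInt.mono_set (Set.Ioc_subset_Ioc_right ht.2)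
    rw [integral_sub hsubInt hsubInt', key t ht, sub_self]
  -- transfer back
  filter_upwards [hfinal, hveq, ae_restrict_mem measurableSet_Ioc] with s h1 h2 h3
  have h4 : hconv l w s = hconv l₀ w₀ s := hconv_congr hl₀ (hsub h3.2 hweq)
  rw [h2, h4]
  linarith [h1]
end

section
/- Let l ∈ L¹((0,T)) and v ∈ L_p((0,T); ℝ) with 1 ≤ p < ∞. For h > 0 define the translate (τ_h f)(t) = f(t+h). Then ∫₀^{T−h} |(l∗v)(t+h) − (l∗v)(t)|^p dt ≤ 2^p ( |τ_h l − l|_{L¹((0,T−h))}^p + |χ_{(0,h)} l|_{L¹((0,T))}^p ) · |v|_{L_p((0,T))}^p, where χ_{(0,h)} is the indicator function of (0,h). -/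
open MeasureTheory Set
open scoped ENNReal NNReal

namespace Stmt1Helpers

lemma lint_indicator_restrict {A W : Set ℝ} (hA : MeasurableSet A) (f : ℝ → ℝ≥0∞) :
    ∫⁻ x in W, A.indicator f x = ∫⁻ x in A ∩ W, f x := by
  rw [lintegral_indicator hA, Measure.restrict_restrict hA]

lemma lint_indicator_mul {A U : Set ℝ} (hA : MeasurableSet A) (hAU : A ⊆ U)
    (f g : ℝ → ℝ≥0∞) :
    ∫⁻ s in U, A.indicator f s * g s = ∫⁻ s in A, f s * g s := by
  have h : (fun s => A.indicator f s * g s) = A.indicator (fun s => f s * g s) := by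
    funext s; by_cases hs : s ∈ A <;> simp [hs]
  rw [h, lintegral_indicator hA, Measure.restrict_restrict hA, inter_eq_left.mpr hAU]

lemma lint_comp_sub_left (c : ℝ) {f : ℝ → ℝ≥0∞} (hf : Measurable f) {B : Set ℝ}
    (hB : MeasurableSet B) :
    ∫⁻ s in (fun x => c - x) ⁻¹' B, f (c - s) = ∫⁻ u in B, f u :=
  (Measure.measurePreserving_sub_left volume c).setLIntegral_comp_preimage hB hf

lemma lint_comp_sub_right (c : ℝ) {f : ℝ → ℝ≥0∞} (hf : Measurable f) {B : Set ℝ}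
    (hB : MeasurableSet B) :
    ∫⁻ s in (fun x => x - c) ⁻¹' B, f (s - c) = ∫⁻ u in B, f u := by
  have hmp : MeasurePreserving (fun x : ℝ => x - c) volume volume := by
    simpa [sub_eq_add_neg] using measurePreserving_add_right (volume : Measure ℝ) (-c)
  exact hmp.setLIntegral_comp_preimage hB hf

lemma lint_sub_left' (c : ℝ) {f : ℝ → ℝ≥0∞} (hf : Measurable f) {A B : Set ℝ}
    (hB : MeasurableSet B) (hAB : A = (fun x => c - x) ⁻¹' B) {g : ℝ → ℝ≥0∞}
    (hg : ∀ s, g s = f (c - s)) : ∫⁻ s in A, g s = ∫⁻ u in B, f u := by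
  subst hAB
  rw [lintegral_congr hg]
  exact lint_comp_sub_left c hf hB

lemma lint_sub_right' (c : ℝ) {f : ℝ → ℝ≥0∞} (hf : Measurable f) {A B : Set ℝ}
    (hB : MeasurableSet B) (hAB : A = (fun x => x - c) ⁻¹' B) {g : ℝ → ℝ≥0∞}
    (hg : ∀ s, g s = f (s - c)) : ∫⁻ s in A, g s = ∫⁻ u in B, f u := by
  subst hAB
  rw [lintegral_congr hg]
  exact lint_comp_sub_right c hf hB

lemma swap_col_bound {K : ℝ × ℝ → ℝ≥0∞} (hK : Measurable K) {g : ℝ → ℝ≥0∞}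
    (hg : Measurable g) {S U : Set ℝ} (hU : MeasurableSet U)
    {B : ℝ≥0∞} (hcol : ∀ s ∈ U, ∫⁻ t in S, K (t, s) ≤ B) :
    ∫⁻ t in S, ∫⁻ s in U, K (t, s) * g s ≤ B * ∫⁻ s in U, g s := by
  have hmeas : AEMeasurable (Function.uncurry fun t s => K (t, s) * g s)
      ((volume.restrict S).prod (volume.restrict U)) := by
    apply Measurable.aemeasurable
    exact (hK.comp measurable_id).mul (hg.comp measurable_snd)
  rw [lintegral_lintegral_swap hmeas]
  calc ∫⁻ s in U, ∫⁻ t in S, K (t, s) * g s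
      = ∫⁻ s in U, (∫⁻ t in S, K (t, s)) * g s := by
        refine lintegral_congr fun s => ?_
        exact lintegral_mul_const _ (hK.comp (measurable_id.prodMk measurable_const))
    _ ≤ ∫⁻ s in U, B * g s := by
        refine setLIntegral_mono' hU fun s hs => ?_
        exact mul_le_mul_left (hcol s hs) _
    _ = B * ∫⁻ s in U, g s := lintegral_const_mul'' _ hg.aemeasurable

lemma rpow_add_le_two_rpow (a b : ℝ≥0∞) {p : ℝ} (hp : 0 ≤ p) :
    (a + b) ^ p ≤ 2 ^ p * (a ^ p + b ^ p) := by
  have key : ∀ x y : ℝ≥0∞, x ≤ y → (x + y) ^ p ≤ 2 ^ p * (x ^ p + y ^ p) := by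
    intro x y hxy
    calc (x + y) ^ p ≤ (2 * y) ^ p := by
          refine ENNReal.rpow_le_rpow ?_ hp
          rw [two_mul]; exact add_le_add_left hxy _
      _ = 2 ^ p * y ^ p := ENNReal.mul_rpow_of_nonneg _ _ hp
      _ ≤ 2 ^ p * (x ^ p + y ^ p) := mul_le_mul_right le_add_self _
  rcases le_total a b with hab | hab
  · exact key a b hab
  · rw [add_comm, add_comm (a ^ p)]; exact key b a hab

lemma rpow_sub_one_mul {A : ℝ≥0∞} (hA : A ≠ ∞) {p : ℝ} (hp : 1 ≤ p) :
    A ^ (p - 1) * A = A ^ p := by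
  rcases eq_or_ne A 0 with rfl | hA0
  · rcases eq_or_lt_of_le hp with hp1 | hp1
    · rw [← hp1]; simp
    · rw [ENNReal.zero_rpow_of_pos (by linarith), ENNReal.zero_rpow_of_pos (by linarith),
        mul_zero]
  · conv_lhs => rw [show A ^ (p - 1) * A = A ^ (p - 1) * A ^ (1:ℝ) by rw [ENNReal.rpow_one]]
    rw [← ENNReal.rpow_add _ _ hA0 hA, sub_add_cancel]

lemma schur {K : ℝ × ℝ → ℝ≥0∞} (hK : Measurable K) {g : ℝ → ℝ≥0∞} (hg : Measurable g)
    {S U : Set ℝ} (hS : MeasurableSet S) (hU : MeasurableSet U) {p : ℝ} (hp : 1 ≤ p)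
    {A B : ℝ≥0∞} (hA : A ≠ ∞)
    (hrow : ∀ t ∈ S, ∫⁻ s in U, K (t, s) ≤ A)
    (hcol : ∀ s ∈ U, ∫⁻ t in S, K (t, s) ≤ B) :
    ∫⁻ t in S, (∫⁻ s in U, K (t, s) * g s) ^ p
      ≤ A ^ (p - 1) * (B * ∫⁻ s in U, g s ^ p) := by
  have hp0 : (0:ℝ) < p := lt_of_lt_of_le one_pos hp
  have key : ∀ t ∈ S, (∫⁻ s in U, K (t, s) * g s) ^ p
      ≤ A ^ (p - 1) * ∫⁻ s in U, K (t, s) * g s ^ p := by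
    intro t ht
    have hKm : Measurable fun s => K (t, s) := hK.comp (measurable_const.prodMk measurable_id)
    rcases eq_or_lt_of_le hp with hp1 | hp1
    · rw [← hp1]
      simp only [sub_self, ENNReal.rpow_one, ENNReal.rpow_zero, one_mul]
      exact le_of_eq (lintegral_congr fun s => by simp)
    · have hq1 : (1:ℝ) < p / (p - 1) := (one_lt_div (by linarith)).2 (by linarith)
      have hpq : (p / (p - 1)).HolderConjugate p := by
        rw [Real.holderConjugate_iff]
        constructor
        · exact hq1
        · rw [inv_div]; field_simp; ring
      set q : ℝ := p / (p - 1) with hqdef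
      have hq0 : q ≠ 0 := by positivity
      have hstep1 : ∫⁻ s in U, K (t, s) * g s
          ≤ (∫⁻ s in U, K (t, s)) ^ (1/q) * (∫⁻ s in U, K (t, s) * g s ^ p) ^ (1/p) := by
        have holder := ENNReal.lintegral_mul_le_Lp_mul_Lq (volume.restrict U) hpq
          (f := fun s => K (t, s) ^ (1/q)) (g := fun s => K (t, s) ^ (1/p) * g s)
          ((hKm.pow_const _).aemeasurable) (((hKm.pow_const _).mul hg).aemeasurable)
        have e1 : ∀ s, (K (t, s) ^ (1/q)) * (K (t, s) ^ (1/p) * g s) = K (t, s) * g s := by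
          intro s
          rw [← mul_assoc, ← ENNReal.rpow_add_of_nonneg _ _ (by positivity) (by positivity),
            one_div, one_div, hpq.inv_add_inv_eq_one, ENNReal.rpow_one]
        have e2 : ∀ s, (K (t, s) ^ (1/q)) ^ q = K (t, s) := by
          intro s
          rw [← ENNReal.rpow_mul, one_div, inv_mul_cancel₀ hq0, ENNReal.rpow_one]
        have e3 : ∀ s, (K (t, s) ^ (1/p) * g s) ^ p = K (t, s) * g s ^ p := by
          intro s
          rw [ENNReal.mul_rpow_of_nonneg _ _ hp0.le, ← ENNReal.rpow_mul, one_div,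
            inv_mul_cancel₀ hp0.ne', ENNReal.rpow_one]
        calc ∫⁻ s in U, K (t, s) * g s
            = ∫⁻ s in U, (fun s => K (t, s) ^ (1/q)) s * (fun s => K (t, s) ^ (1/p) * g s) s := by
              refine lintegral_congr fun s => (e1 s).symm
          _ ≤ (∫⁻ s in U, (K (t, s) ^ (1/q)) ^ q) ^ (1/q)
              * (∫⁻ s in U, (K (t, s) ^ (1/p) * g s) ^ p) ^ (1/p) := holder
          _ = (∫⁻ s in U, K (t, s)) ^ (1/q) * (∫⁻ s in U, K (t, s) * g s ^ p) ^ (1/p) := by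
              rw [lintegral_congr fun s => e2 s, lintegral_congr fun s => e3 s]
      calc (∫⁻ s in U, K (t, s) * g s) ^ p
          ≤ ((∫⁻ s in U, K (t, s)) ^ (1/q) * (∫⁻ s in U, K (t, s) * g s ^ p) ^ (1/p)) ^ p :=
            ENNReal.rpow_le_rpow hstep1 hp0.le
        _ = (∫⁻ s in U, K (t, s)) ^ ((1/q) * p) * (∫⁻ s in U, K (t, s) * g s ^ p) := by
            rw [ENNReal.mul_rpow_of_nonneg _ _ hp0.le, ← ENNReal.rpow_mul, ← ENNReal.rpow_mul,
              one_div p, inv_mul_cancel₀ hp0.ne', ENNReal.rpow_one]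
        _ = (∫⁻ s in U, K (t, s)) ^ (p - 1) * (∫⁻ s in U, K (t, s) * g s ^ p) := by
            congr 1
            rw [hqdef, one_div, inv_div]
            field_simp
        _ ≤ A ^ (p - 1) * (∫⁻ s in U, K (t, s) * g s ^ p) :=
            mul_le_mul_left (ENNReal.rpow_le_rpow (hrow t ht) (by linarith)) _
  calc ∫⁻ t in S, (∫⁻ s in U, K (t, s) * g s) ^ p
      ≤ ∫⁻ t in S, A ^ (p - 1) * ∫⁻ s in U, K (t, s) * g s ^ p := setLIntegral_mono' hS key
    _ = A ^ (p - 1) * ∫⁻ t in S, ∫⁻ s in U, K (t, s) * g s ^ p :=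
        lintegral_const_mul' _ _ (ENNReal.rpow_ne_top_of_nonneg (by linarith) hA)
    _ ≤ A ^ (p - 1) * (B * ∫⁻ s in U, g s ^ p) :=
        mul_le_mul_right (swap_col_bound hK (hg.pow_const p) hU hcol) _


theorem stmt1_meas
    (T h p : ℝ) (hT : 0 < T) (hh : 0 < h) (hhT : h < T) (hp : 1 ≤ p)
    (l v : ℝ → ℝ) (hlm : Measurable l) (hvm : Measurable v)
    (hl : IntegrableOn l (Set.Ioc 0 T))
    (hv : MemLp v (ENNReal.ofReal p) (volume.restrict (Set.Ioc 0 T))) :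
    ∫ t in Set.Ioc 0 (T - h), |hconv l v (t + h) - hconv l v t| ^ p
      ≤ 2 ^ p *
        ((∫ t in Set.Ioc 0 (T - h), |l (t + h) - l t|) ^ p
          + (∫ s in Set.Ioc 0 T, |Set.indicator (Set.Ioo 0 h) l s|) ^ p) *
        (∫ t in Set.Ioc 0 T, |v t| ^ p) := by
  have hp0 : (0:ℝ) < p := lt_of_lt_of_le one_pos hp
  have hSm : MeasurableSet (Ioc (0:ℝ) (T - h)) := measurableSet_Ioc
  have hUm : MeasurableSet (Ioc (0:ℝ) T) := measurableSet_Ioc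
  have hlE : Measurable fun x => (‖l x‖₊ : ℝ≥0∞) := hlm.nnnorm.coe_nnreal_ennreal
  have hvE : Measurable fun x => (‖v x‖₊ : ℝ≥0∞) := hvm.nnnorm.coe_nnreal_ennreal
  set A1 : ℝ≥0∞ := ∫⁻ u in Ioc 0 (T - h), (‖l (u + h) - l u‖₊ : ℝ≥0∞) with hA1def
  set A2 : ℝ≥0∞ := ∫⁻ u in Ioo 0 h, (‖l u‖₊ : ℝ≥0∞) with hA2def
  set Ve : ℝ≥0∞ := ∫⁻ s in Ioc 0 T, (‖v s‖₊ : ℝ≥0∞) ^ p with hVedef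
  set Lam : ℝ≥0∞ := ∫⁻ x in Ioc 0 T, (‖l x‖₊ : ℝ≥0∞) with hLamdef
  have hLam : Lam ≠ ∞ := ne_of_lt hl.2
  have hLam' : (∫⁻ x in Icc 0 T, (‖l x‖₊ : ℝ≥0∞)) = Lam :=
    (setLIntegral_congr Ioc_ae_eq_Icc).symm
  have hIoc_ae_Icc : ∀ a : ℝ, Ioc 0 a =ᵐ[volume] Icc 0 a := fun a => Ioc_ae_eq_Icc
  have hIco_ae_Ioc : ∀ a b : ℝ, Ico a b =ᵐ[volume] Ioc a b :=
    fun a b => Ioo_ae_eq_Ico.symm.trans Ioo_ae_eq_Ioc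
  have hIco_ae_Ioo : ∀ a b : ℝ, Ico a b =ᵐ[volume] Ioo a b := fun a b => Ioo_ae_eq_Ico.symm
  -- A1 is finite
  have hshiftInt : (∫⁻ u in Ioc 0 (T - h), (‖l (u + h)‖₊ : ℝ≥0∞)) ≤ Lam := by
    have hpre : Ioc (0:ℝ) (T - h) = (fun x => x - (-h)) ⁻¹' (Ioc h T) := by
      ext x
      simp only [mem_Ioc, mem_preimage, sub_neg_eq_add]
      constructor <;> rintro ⟨h1, h2⟩ <;> exact ⟨by linarith, by linarith⟩
    rw [lint_sub_right' (-h) hlE measurableSet_Ioc hpre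
      (g := fun u => (‖l (u + h)‖₊ : ℝ≥0∞)) (fun s => by rw [sub_neg_eq_add])]
    exact lintegral_mono_set (Ioc_subset_Ioc_left hh.le)
  have hA1top : A1 ≠ ∞ := by
    have hb : A1 ≤ (∫⁻ u in Ioc 0 (T - h), (‖l (u + h)‖₊ : ℝ≥0∞))
        + ∫⁻ u in Ioc 0 (T - h), (‖l u‖₊ : ℝ≥0∞) := by
      have hm1 : Measurable fun u : ℝ => (‖l (u + h)‖₊ : ℝ≥0∞) := hlE.comp (measurable_add_const h)
      rw [hA1def, ← lintegral_add_left hm1]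
      refine lintegral_mono fun u => ?_
      calc (‖l (u + h) - l u‖₊ : ℝ≥0∞) ≤ ((‖l (u + h)‖₊ + ‖l u‖₊ : ℝ≥0) : ℝ≥0∞) :=
            ENNReal.coe_le_coe.2 (nnnorm_sub_le _ _)
        _ = (‖l (u + h)‖₊ : ℝ≥0∞) + (‖l u‖₊ : ℝ≥0∞) := ENNReal.coe_add _ _
    have hSU : Ioc (0:ℝ) (T - h) ⊆ Ioc 0 T := Ioc_subset_Ioc_right (by linarith)
    refine ne_of_lt (lt_of_le_of_lt hb (lt_of_le_of_lt
      (add_le_add hshiftInt (lintegral_mono_set hSU)) ?_))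
    exact ENNReal.add_lt_top.2 ⟨lt_top_iff_ne_top.2 hLam, lt_top_iff_ne_top.2 hLam⟩
  have hIooU : Ioo (0:ℝ) h ⊆ Ioc 0 T := fun x hx => ⟨hx.1, by linarith [hx.2]⟩
  have hA2top : A2 ≠ ∞ :=
    ne_of_lt (lt_of_le_of_lt (lintegral_mono_set hIooU) (lt_top_iff_ne_top.2 hLam))
  have hVe : Ve ≠ ∞ := by
    have hne0 : (ENNReal.ofReal p) ≠ 0 := (ENNReal.ofReal_pos.mpr hp0).ne'
    have heq : Ve = (eLpNorm v (ENNReal.ofReal p) (volume.restrict (Ioc 0 T))) ^ p := by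
      rw [eLpNorm_eq_lintegral_rpow_enorm_toReal hne0 ENNReal.ofReal_ne_top,
        ENNReal.toReal_ofReal hp0.le, ← ENNReal.rpow_mul, one_div,
        inv_mul_cancel₀ hp0.ne', ENNReal.rpow_one, hVedef]
      simp only [enorm_eq_nnnorm]
    rw [heq]
    exact (ENNReal.rpow_lt_top_of_nonneg hp0.le hv.2.ne).ne
  haveI : IsFiniteMeasure (volume.restrict (Ioc (0:ℝ) T)) :=
    ⟨by rw [Measure.restrict_apply_univ]; exact measure_Ioc_lt_top⟩
  have hvint : IntegrableOn v (Ioc 0 T) := by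
    refine hv.integrable ?_
    rw [← ENNReal.ofReal_one]
    exact ENNReal.ofReal_le_ofReal hp
  have hvL1 : (∫⁻ s in Ioc 0 T, (‖v s‖₊ : ℝ≥0∞)) ≠ ∞ := ne_of_lt hvint.2
  -- kernels
  have hmeas_set1 : MeasurableSet {z : ℝ × ℝ | 0 < z.2 ∧ z.2 ≤ z.1} :=
    (measurableSet_lt measurable_const measurable_snd).inter
      (measurableSet_le measurable_snd measurable_fst)
  have hmeas_set2 : MeasurableSet {z : ℝ × ℝ | z.1 < z.2 ∧ z.2 ≤ z.1 + h} :=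
    (measurableSet_lt measurable_fst measurable_snd).inter
      (measurableSet_le measurable_snd (measurable_fst.add_const h))
  have hmeas_set3 : MeasurableSet {z : ℝ × ℝ | 0 < z.2 ∧ z.2 ≤ z.1 + h} :=
    (measurableSet_lt measurable_const measurable_snd).inter
      (measurableSet_le measurable_snd (measurable_fst.add_const h))
  set Kone : ℝ × ℝ → ℝ≥0∞ := fun z => Set.indicator {z : ℝ × ℝ | 0 < z.2 ∧ z.2 ≤ z.1}
    (fun z => (‖l (z.1 + h - z.2) - l (z.1 - z.2)‖₊ : ℝ≥0∞)) z with hK1def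
  set Ktwo : ℝ × ℝ → ℝ≥0∞ := fun z => Set.indicator {z : ℝ × ℝ | z.1 < z.2 ∧ z.2 ≤ z.1 + h}
    (fun z => (‖l (z.1 + h - z.2)‖₊ : ℝ≥0∞)) z with hK2def
  set Mone : ℝ × ℝ → ℝ≥0∞ := fun z => Set.indicator {z : ℝ × ℝ | 0 < z.2 ∧ z.2 ≤ z.1 + h}
    (fun z => (‖l (z.1 + h - z.2)‖₊ : ℝ≥0∞)) z with hM1def
  set Mtwo : ℝ × ℝ → ℝ≥0∞ := fun z => Set.indicator {z : ℝ × ℝ | 0 < z.2 ∧ z.2 ≤ z.1}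
    (fun z => (‖l (z.1 - z.2)‖₊ : ℝ≥0∞)) z with hM2def
  have hlsub1 : Measurable fun z : ℝ × ℝ => (‖l (z.1 + h - z.2)‖₊ : ℝ≥0∞) :=
    (hlm.comp ((measurable_fst.add_const h).sub measurable_snd)).nnnorm.coe_nnreal_ennreal
  have hlsub2 : Measurable fun z : ℝ × ℝ => (‖l (z.1 - z.2)‖₊ : ℝ≥0∞) :=
    (hlm.comp (measurable_fst.sub measurable_snd)).nnnorm.coe_nnreal_ennreal
  have hK1m : Measurable Kone := by
    rw [hK1def]
    exact Measurable.indicator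
      ((hlm.comp ((measurable_fst.add_const h).sub measurable_snd)).sub
        (hlm.comp (measurable_fst.sub measurable_snd))).nnnorm.coe_nnreal_ennreal hmeas_set1
  have hK2m : Measurable Ktwo := by rw [hK2def]; exact hlsub1.indicator hmeas_set2
  have hM1m : Measurable Mone := by rw [hM1def]; exact hlsub1.indicator hmeas_set3
  have hM2m : Measurable Mtwo := by rw [hM2def]; exact hlsub2.indicator hmeas_set1
  -- sections in s
  have hK1sec : ∀ t s : ℝ, Kone (t, s)
      = (Ioc 0 t).indicator (fun s => (‖l (t + h - s) - l (t - s)‖₊ : ℝ≥0∞)) s := by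
    intro t s
    simp only [hK1def, Set.indicator_apply, Set.mem_setOf_eq, Set.mem_Ioc]
  have hK2sec : ∀ t s : ℝ, Ktwo (t, s)
      = (Ioc t (t + h)).indicator (fun s => (‖l (t + h - s)‖₊ : ℝ≥0∞)) s := by
    intro t s
    simp only [hK2def, Set.indicator_apply, Set.mem_setOf_eq, Set.mem_Ioc]
  have hM1sec : ∀ t s : ℝ, Mone (t, s)
      = (Ioc 0 (t + h)).indicator (fun s => (‖l (t + h - s)‖₊ : ℝ≥0∞)) s := by
    intro t s
    simp only [hM1def, Set.indicator_apply, Set.mem_setOf_eq, Set.mem_Ioc]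
  have hM2sec : ∀ t s : ℝ, Mtwo (t, s)
      = (Ioc 0 t).indicator (fun s => (‖l (t - s)‖₊ : ℝ≥0∞)) s := by
    intro t s
    simp only [hM2def, Set.indicator_apply, Set.mem_setOf_eq, Set.mem_Ioc]
  -- sections in t
  have hK1col : ∀ s t : ℝ, 0 < s → Kone (t, s)
      = (Ici s).indicator (fun t => (‖l (t + h - s) - l (t - s)‖₊ : ℝ≥0∞)) t := by
    intro s t h0s
    simp only [hK1def, Set.indicator_apply, Set.mem_setOf_eq, Set.mem_Ici]
    by_cases hc : s ≤ t
    · rw [if_pos ⟨h0s, hc⟩, if_pos hc]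
    · rw [if_neg (fun hc' => hc hc'.2), if_neg hc]
  have hK2col : ∀ s t : ℝ, Ktwo (t, s)
      = (Ico (s - h) s).indicator (fun t => (‖l (t + h - s)‖₊ : ℝ≥0∞)) t := by
    intro s t
    simp only [hK2def, Set.indicator_apply, Set.mem_setOf_eq, Set.mem_Ico]
    by_cases hc : t < s ∧ s ≤ t + h
    · rw [if_pos hc, if_pos ⟨by linarith [hc.2], hc.1⟩]
    · rw [if_neg hc, if_neg (fun hc' => hc ⟨hc'.2, by linarith [hc'.1]⟩)]
  have hM1col : ∀ s t : ℝ, 0 < s → Mone (t, s)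
      = (Ici (s - h)).indicator (fun t => (‖l (t + h - s)‖₊ : ℝ≥0∞)) t := by
    intro s t h0s
    simp only [hM1def, Set.indicator_apply, Set.mem_setOf_eq, Set.mem_Ici]
    by_cases hc : s ≤ t + h
    · rw [if_pos ⟨h0s, hc⟩, if_pos (by linarith)]
    · rw [if_neg (fun hc' => hc hc'.2), if_neg (fun hc' => hc (by linarith))]
  have hM2col : ∀ s t : ℝ, 0 < s → Mtwo (t, s)
      = (Ici s).indicator (fun t => (‖l (t - s)‖₊ : ℝ≥0∞)) t := by
    intro s t h0s
    simp only [hM2def, Set.indicator_apply, Set.mem_setOf_eq, Set.mem_Ici]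
    by_cases hc : s ≤ t
    · rw [if_pos ⟨h0s, hc⟩, if_pos hc]
    · rw [if_neg (fun hc' => hc hc'.2), if_neg hc]
  -- row and column bounds
  have hdel : Measurable fun u : ℝ => (‖l (u + h) - l u‖₊ : ℝ≥0∞) :=
    ((hlm.comp (measurable_add_const h)).sub hlm).nnnorm.coe_nnreal_ennreal
  have row1 : ∀ t ∈ Ioc (0:ℝ) (T - h), (∫⁻ s in Ioc 0 T, Kone (t, s)) ≤ A1 := by
    intro t ht
    obtain ⟨h0t, htT⟩ := ht
    have hpre : Ioc (0:ℝ) t = (fun x => t - x) ⁻¹' (Ico 0 t) := by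
      ext x
      simp only [mem_Ioc, mem_preimage, mem_Ico]
      constructor <;> rintro ⟨h1, h2⟩ <;> constructor <;> linarith
    calc ∫⁻ s in Ioc 0 T, Kone (t, s)
        = ∫⁻ s in Ioc 0 t ∩ Ioc 0 T, (‖l (t + h - s) - l (t - s)‖₊ : ℝ≥0∞) := by
          rw [lintegral_congr fun s => hK1sec t s, lint_indicator_restrict measurableSet_Ioc]
      _ ≤ ∫⁻ s in Ioc 0 t, (‖l (t + h - s) - l (t - s)‖₊ : ℝ≥0∞) :=
          lintegral_mono_set inter_subset_left
      _ = ∫⁻ u in Ico 0 t, (‖l (u + h) - l u‖₊ : ℝ≥0∞) :=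
          lint_sub_left' t hdel measurableSet_Ico hpre
            (fun s => by rw [show t + h - s = (t - s) + h from by ring])
      _ = ∫⁻ u in Ioc 0 t, (‖l (u + h) - l u‖₊ : ℝ≥0∞) := setLIntegral_congr (hIco_ae_Ioc 0 t)
      _ ≤ A1 := by rw [hA1def]; exact lintegral_mono_set (Ioc_subset_Ioc_right htT)
  have col1 : ∀ s ∈ Ioc (0:ℝ) T, (∫⁻ t in Ioc 0 (T - h), Kone (t, s)) ≤ A1 := by
    intro s hs
    obtain ⟨h0s, hsT⟩ := hs
    have hpre : Icc s (T - h) = (fun x => x - s) ⁻¹' (Icc 0 (T - h - s)) := by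
      ext x
      simp only [mem_Icc, mem_preimage]
      constructor <;> rintro ⟨h1, h2⟩ <;> constructor <;> linarith
    calc ∫⁻ t in Ioc 0 (T - h), Kone (t, s)
        = ∫⁻ t in Ici s ∩ Ioc 0 (T - h), (‖l (t + h - s) - l (t - s)‖₊ : ℝ≥0∞) := by
          rw [lintegral_congr fun t => hK1col s t h0s, lint_indicator_restrict measurableSet_Ici]
      _ ≤ ∫⁻ t in Icc s (T - h), (‖l (t + h - s) - l (t - s)‖₊ : ℝ≥0∞) :=
          lintegral_mono_set (fun x hx => ⟨hx.1, hx.2.2⟩)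
      _ = ∫⁻ u in Icc 0 (T - h - s), (‖l (u + h) - l u‖₊ : ℝ≥0∞) :=
          lint_sub_right' s hdel measurableSet_Icc hpre
            (fun t => by rw [show t + h - s = (t - s) + h from by ring])
      _ ≤ ∫⁻ u in Icc 0 (T - h), (‖l (u + h) - l u‖₊ : ℝ≥0∞) :=
          lintegral_mono_set (Icc_subset_Icc_right (by linarith))
      _ = A1 := by rw [hA1def]; exact (setLIntegral_congr (hIoc_ae_Icc (T - h))).symm
  have row2 : ∀ t ∈ Ioc (0:ℝ) (T - h), (∫⁻ s in Ioc 0 T, Ktwo (t, s)) ≤ A2 := by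
    intro t ht
    obtain ⟨h0t, htT⟩ := ht
    have hpre : Ioc t (t + h) = (fun x => t + h - x) ⁻¹' (Ico 0 h) := by
      ext x
      simp only [mem_Ioc, mem_preimage, mem_Ico]
      constructor <;> rintro ⟨h1, h2⟩ <;> constructor <;> linarith
    calc ∫⁻ s in Ioc 0 T, Ktwo (t, s)
        = ∫⁻ s in Ioc t (t + h) ∩ Ioc 0 T, (‖l (t + h - s)‖₊ : ℝ≥0∞) := by
          rw [lintegral_congr fun s => hK2sec t s, lint_indicator_restrict measurableSet_Ioc]
      _ ≤ ∫⁻ s in Ioc t (t + h), (‖l (t + h - s)‖₊ : ℝ≥0∞) :=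
          lintegral_mono_set inter_subset_left
      _ = ∫⁻ u in Ico 0 h, (‖l u‖₊ : ℝ≥0∞) :=
          lint_sub_left' (t + h) hlE measurableSet_Ico hpre (fun s => rfl)
      _ = A2 := by rw [hA2def]; exact setLIntegral_congr (hIco_ae_Ioo 0 h)
  have col2 : ∀ s ∈ Ioc (0:ℝ) T, (∫⁻ t in Ioc 0 (T - h), Ktwo (t, s)) ≤ A2 := by
    intro s hs
    have hpre : Ico (s - h) s = (fun x => x - (s - h)) ⁻¹' (Ico 0 h) := by
      ext x
      simp only [mem_Ico, mem_preimage]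
      constructor <;> rintro ⟨h1, h2⟩ <;> constructor <;> linarith
    calc ∫⁻ t in Ioc 0 (T - h), Ktwo (t, s)
        = ∫⁻ t in Ico (s - h) s ∩ Ioc 0 (T - h), (‖l (t + h - s)‖₊ : ℝ≥0∞) := by
          rw [lintegral_congr fun t => hK2col s t, lint_indicator_restrict measurableSet_Ico]
      _ ≤ ∫⁻ t in Ico (s - h) s, (‖l (t + h - s)‖₊ : ℝ≥0∞) :=
          lintegral_mono_set inter_subset_left
      _ = ∫⁻ u in Ico 0 h, (‖l u‖₊ : ℝ≥0∞) :=
          lint_sub_right' (s - h) hlE measurableSet_Ico hpre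
            (fun t => by rw [show t + h - s = t - (s - h) from by ring])
      _ = A2 := by rw [hA2def]; exact setLIntegral_congr (hIco_ae_Ioo 0 h)
  have col3 : ∀ s ∈ Ioc (0:ℝ) T, (∫⁻ t in Ioc 0 (T - h), Mone (t, s)) ≤ Lam := by
    intro s hs
    obtain ⟨h0s, hsT⟩ := hs
    have hpre : Icc (s - h) (T - h) = (fun x => x - (s - h)) ⁻¹' (Icc 0 (T - s)) := by
      ext x
      simp only [mem_Icc, mem_preimage]
      constructor <;> rintro ⟨h1, h2⟩ <;> constructor <;> linarith
    calc ∫⁻ t in Ioc 0 (T - h), Mone (t, s)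
        = ∫⁻ t in Ici (s - h) ∩ Ioc 0 (T - h), (‖l (t + h - s)‖₊ : ℝ≥0∞) := by
          rw [lintegral_congr fun t => hM1col s t h0s, lint_indicator_restrict measurableSet_Ici]
      _ ≤ ∫⁻ t in Icc (s - h) (T - h), (‖l (t + h - s)‖₊ : ℝ≥0∞) :=
          lintegral_mono_set (fun x hx => ⟨hx.1, hx.2.2⟩)
      _ = ∫⁻ u in Icc 0 (T - s), (‖l u‖₊ : ℝ≥0∞) :=
          lint_sub_right' (s - h) hlE measurableSet_Icc hpre
            (fun t => by rw [show t + h - s = t - (s - h) from by ring])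
      _ ≤ ∫⁻ u in Icc 0 T, (‖l u‖₊ : ℝ≥0∞) :=
          lintegral_mono_set (Icc_subset_Icc_right (by linarith))
      _ = Lam := hLam'
  have col4 : ∀ s ∈ Ioc (0:ℝ) T, (∫⁻ t in Ioc 0 (T - h), Mtwo (t, s)) ≤ Lam := by
    intro s hs
    obtain ⟨h0s, hsT⟩ := hs
    have hpre : Icc s (T - h) = (fun x => x - s) ⁻¹' (Icc 0 (T - h - s)) := by
      ext x
      simp only [mem_Icc, mem_preimage]
      constructor <;> rintro ⟨h1, h2⟩ <;> constructor <;> linarith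
    calc ∫⁻ t in Ioc 0 (T - h), Mtwo (t, s)
        = ∫⁻ t in Ici s ∩ Ioc 0 (T - h), (‖l (t - s)‖₊ : ℝ≥0∞) := by
          rw [lintegral_congr fun t => hM2col s t h0s, lint_indicator_restrict measurableSet_Ici]
      _ ≤ ∫⁻ t in Icc s (T - h), (‖l (t - s)‖₊ : ℝ≥0∞) :=
          lintegral_mono_set (fun x hx => ⟨hx.1, hx.2.2⟩)
      _ = ∫⁻ u in Icc 0 (T - h - s), (‖l u‖₊ : ℝ≥0∞) :=
          lint_sub_right' s hlE measurableSet_Icc hpre (fun t => rfl)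
      _ ≤ ∫⁻ u in Icc 0 T, (‖l u‖₊ : ℝ≥0∞) :=
          lintegral_mono_set (Icc_subset_Icc_right (by linarith))
      _ = Lam := hLam'
  -- a.e. finiteness of auxiliary integrals
  have hW1meas : Measurable fun t => ∫⁻ s in Ioc 0 T, Mone (t, s) * (‖v s‖₊ : ℝ≥0∞) :=
    Measurable.lintegral_prod_right' (hM1m.mul (hvE.comp measurable_snd))
  have hW2meas : Measurable fun t => ∫⁻ s in Ioc 0 T, Mtwo (t, s) * (‖v s‖₊ : ℝ≥0∞) :=
    Measurable.lintegral_prod_right' (hM2m.mul (hvE.comp measurable_snd))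
  have hW1fin : ∀ᵐ t ∂(volume.restrict (Ioc 0 (T - h))),
      (∫⁻ s in Ioc 0 T, Mone (t, s) * (‖v s‖₊ : ℝ≥0∞)) < ∞ := by
    refine ae_lt_top hW1meas ?_
    refine ne_of_lt (lt_of_le_of_lt (swap_col_bound hM1m hvE hUm col3) ?_)
    exact ENNReal.mul_lt_top (lt_top_iff_ne_top.2 hLam) (lt_top_iff_ne_top.2 hvL1)
  have hW2fin : ∀ᵐ t ∂(volume.restrict (Ioc 0 (T - h))),
      (∫⁻ s in Ioc 0 T, Mtwo (t, s) * (‖v s‖₊ : ℝ≥0∞)) < ∞ := by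
    refine ae_lt_top hW2meas ?_
    refine ne_of_lt (lt_of_le_of_lt (swap_col_bound hM2m hvE hUm col4) ?_)
    exact ENNReal.mul_lt_top (lt_top_iff_ne_top.2 hLam) (lt_top_iff_ne_top.2 hvL1)
  -- a.e. pointwise bound
  have hDptwise : ∀ᵐ t ∂(volume.restrict (Ioc 0 (T - h))),
      (‖hconv l v (t + h) - hconv l v t‖₊ : ℝ≥0∞)
        ≤ (∫⁻ s in Ioc 0 T, Kone (t, s) * (‖v s‖₊ : ℝ≥0∞))
          + ∫⁻ s in Ioc 0 T, Ktwo (t, s) * (‖v s‖₊ : ℝ≥0∞) := by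
    filter_upwards [hW1fin, hW2fin, self_mem_ae_restrict hSm] with t hW1 hW2 htS
    obtain ⟨h0t, htT⟩ := htS
    have hsub1 : Ioc (0:ℝ) (t + h) ⊆ Ioc 0 T := Ioc_subset_Ioc_right (by linarith)
    have hsub2 : Ioc (0:ℝ) t ⊆ Ioc 0 T := Ioc_subset_Ioc_right (by linarith)
    have hsub3 : Ioc t (t + h) ⊆ Ioc (0:ℝ) T := fun x hx =>
      ⟨lt_trans h0t hx.1, by linarith [hx.2]⟩
    have hW1' : (∫⁻ s in Ioc 0 (t + h), (‖l (t + h - s)‖₊ : ℝ≥0∞) * (‖v s‖₊ : ℝ≥0∞)) < ∞ := by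
      refine lt_of_eq_of_lt ?_ hW1
      calc ∫⁻ s in Ioc 0 (t + h), (‖l (t + h - s)‖₊ : ℝ≥0∞) * (‖v s‖₊ : ℝ≥0∞)
          = ∫⁻ s in Ioc 0 T, (Ioc 0 (t + h)).indicator
              (fun s => (‖l (t + h - s)‖₊ : ℝ≥0∞)) s * (‖v s‖₊ : ℝ≥0∞) :=
            (lint_indicator_mul measurableSet_Ioc hsub1 _ _).symm
        _ = ∫⁻ s in Ioc 0 T, Mone (t, s) * (‖v s‖₊ : ℝ≥0∞) :=
            lintegral_congr fun s => by rw [hM1sec t s]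
    have hW2' : (∫⁻ s in Ioc 0 t, (‖l (t - s)‖₊ : ℝ≥0∞) * (‖v s‖₊ : ℝ≥0∞)) < ∞ := by
      refine lt_of_eq_of_lt ?_ hW2
      calc ∫⁻ s in Ioc 0 t, (‖l (t - s)‖₊ : ℝ≥0∞) * (‖v s‖₊ : ℝ≥0∞)
          = ∫⁻ s in Ioc 0 T, (Ioc 0 t).indicator
              (fun s => (‖l (t - s)‖₊ : ℝ≥0∞)) s * (‖v s‖₊ : ℝ≥0∞) :=
            (lint_indicator_mul measurableSet_Ioc hsub2 _ _).symm
        _ = ∫⁻ s in Ioc 0 T, Mtwo (t, s) * (‖v s‖₊ : ℝ≥0∞) :=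
            lintegral_congr fun s => by rw [hM2sec t s]
    have int1 : IntegrableOn (fun s => l (t + h - s) * v s) (Ioc 0 (t + h)) := by
      constructor
      · exact ((hlm.comp (measurable_const.sub measurable_id)).mul hvm).aestronglyMeasurable
      · show (∫⁻ s in Ioc 0 (t + h), (‖l (t + h - s) * v s‖₊ : ℝ≥0∞)) < ∞
        refine lt_of_eq_of_lt (lintegral_congr fun s => ?_) hW1'
        rw [nnnorm_mul, ENNReal.coe_mul]
    have int2 : IntegrableOn (fun s => l (t - s) * v s) (Ioc 0 t) := by
      constructor
      · exact ((hlm.comp (measurable_const.sub measurable_id)).mul hvm).aestronglyMeasurable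
      · show (∫⁻ s in Ioc 0 t, (‖l (t - s) * v s‖₊ : ℝ≥0∞)) < ∞
        refine lt_of_eq_of_lt (lintegral_congr fun s => ?_) hW2'
        rw [nnnorm_mul, ENNReal.coe_mul]
    have int1a : IntegrableOn (fun s => l (t + h - s) * v s) (Ioc 0 t) :=
      int1.mono_set (Ioc_subset_Ioc_right (by linarith))
    have int1b : IntegrableOn (fun s => l (t + h - s) * v s) (Ioc t (t + h)) :=
      int1.mono_set (Ioc_subset_Ioc_left h0t.le)
    have hsplit : hconv l v (t + h) = (∫ s in Ioc 0 t, l (t + h - s) * v s)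
        + ∫ s in Ioc t (t + h), l (t + h - s) * v s := by
      rw [show hconv l v (t + h) = ∫ s in Ioc 0 (t + h), l (t + h - s) * v s from rfl,
        show Ioc (0:ℝ) (t + h) = Ioc 0 t ∪ Ioc t (t + h) from
          (Ioc_union_Ioc_eq_Ioc h0t.le (le_add_of_nonneg_right hh.le)).symm,
        setIntegral_union (Ioc_disjoint_Ioc_of_le le_rfl) measurableSet_Ioc int1a int1b]
    have hdiff : (∫ s in Ioc 0 t, l (t + h - s) * v s) - hconv l v t
        = ∫ s in Ioc 0 t, (l (t + h - s) - l (t - s)) * v s := by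
      rw [show hconv l v t = ∫ s in Ioc 0 t, l (t - s) * v s from rfl,
        ← integral_sub int1a int2]
      congr 1
      funext s
      ring
    have hDeq : hconv l v (t + h) - hconv l v t
        = (∫ s in Ioc 0 t, (l (t + h - s) - l (t - s)) * v s)
          + ∫ s in Ioc t (t + h), l (t + h - s) * v s := by
      rw [hsplit, add_sub_right_comm, hdiff]
    rw [hDeq]
    calc (‖(∫ s in Ioc 0 t, (l (t + h - s) - l (t - s)) * v s)
            + ∫ s in Ioc t (t + h), l (t + h - s) * v s‖₊ : ℝ≥0∞)
        ≤ (‖∫ s in Ioc 0 t, (l (t + h - s) - l (t - s)) * v s‖₊ : ℝ≥0∞)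
          + (‖∫ s in Ioc t (t + h), l (t + h - s) * v s‖₊ : ℝ≥0∞) := by
          exact_mod_cast nnnorm_add_le _ _
      _ ≤ (∫⁻ s in Ioc 0 t, (‖(l (t + h - s) - l (t - s)) * v s‖₊ : ℝ≥0∞))
          + ∫⁻ s in Ioc t (t + h), (‖l (t + h - s) * v s‖₊ : ℝ≥0∞) :=
          add_le_add (enorm_integral_le_lintegral_enorm _)
            (enorm_integral_le_lintegral_enorm _)
      _ = (∫⁻ s in Ioc 0 T, Kone (t, s) * (‖v s‖₊ : ℝ≥0∞))
          + ∫⁻ s in Ioc 0 T, Ktwo (t, s) * (‖v s‖₊ : ℝ≥0∞) := by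
          congr 1
          · calc ∫⁻ s in Ioc 0 t, (‖(l (t + h - s) - l (t - s)) * v s‖₊ : ℝ≥0∞)
                = ∫⁻ s in Ioc 0 t, (‖l (t + h - s) - l (t - s)‖₊ : ℝ≥0∞) * (‖v s‖₊ : ℝ≥0∞) :=
                  lintegral_congr fun s => by rw [nnnorm_mul, ENNReal.coe_mul]
              _ = ∫⁻ s in Ioc 0 T, (Ioc 0 t).indicator
                  (fun s => (‖l (t + h - s) - l (t - s)‖₊ : ℝ≥0∞)) s * (‖v s‖₊ : ℝ≥0∞) :=
                  (lint_indicator_mul measurableSet_Ioc hsub2 _ _).symm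
              _ = ∫⁻ s in Ioc 0 T, Kone (t, s) * (‖v s‖₊ : ℝ≥0∞) :=
                  lintegral_congr fun s => by rw [hK1sec t s]
          · calc ∫⁻ s in Ioc t (t + h), (‖l (t + h - s) * v s‖₊ : ℝ≥0∞)
                = ∫⁻ s in Ioc t (t + h), (‖l (t + h - s)‖₊ : ℝ≥0∞) * (‖v s‖₊ : ℝ≥0∞) :=
                  lintegral_congr fun s => by rw [nnnorm_mul, ENNReal.coe_mul]
              _ = ∫⁻ s in Ioc 0 T, (Ioc t (t + h)).indicator
                  (fun s => (‖l (t + h - s)‖₊ : ℝ≥0∞)) s * (‖v s‖₊ : ℝ≥0∞) :=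
                  (lint_indicator_mul measurableSet_Ioc hsub3 _ _).symm
              _ = ∫⁻ s in Ioc 0 T, Ktwo (t, s) * (‖v s‖₊ : ℝ≥0∞) :=
                  lintegral_congr fun s => by rw [hK2sec t s]
  -- main ENNReal estimate
  have hG1meas : Measurable fun t => ∫⁻ s in Ioc 0 T, Kone (t, s) * (‖v s‖₊ : ℝ≥0∞) :=
    Measurable.lintegral_prod_right' (hK1m.mul (hvE.comp measurable_snd))
  have main : (∫⁻ t in Ioc 0 (T - h), (‖hconv l v (t + h) - hconv l v t‖₊ : ℝ≥0∞) ^ p)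
      ≤ 2 ^ p * (A1 ^ p + A2 ^ p) * Ve := by
    calc ∫⁻ t in Ioc 0 (T - h), (‖hconv l v (t + h) - hconv l v t‖₊ : ℝ≥0∞) ^ p
        ≤ ∫⁻ t in Ioc 0 (T - h), ((∫⁻ s in Ioc 0 T, Kone (t, s) * (‖v s‖₊ : ℝ≥0∞))
            + ∫⁻ s in Ioc 0 T, Ktwo (t, s) * (‖v s‖₊ : ℝ≥0∞)) ^ p :=
          lintegral_mono_ae (hDptwise.mono fun t ht => ENNReal.rpow_le_rpow ht hp0.le)
      _ ≤ ∫⁻ t in Ioc 0 (T - h), 2 ^ p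
            * ((∫⁻ s in Ioc 0 T, Kone (t, s) * (‖v s‖₊ : ℝ≥0∞)) ^ p
              + (∫⁻ s in Ioc 0 T, Ktwo (t, s) * (‖v s‖₊ : ℝ≥0∞)) ^ p) :=
          lintegral_mono fun t => rpow_add_le_two_rpow _ _ hp0.le
      _ = 2 ^ p * ((∫⁻ t in Ioc 0 (T - h), (∫⁻ s in Ioc 0 T, Kone (t, s) * (‖v s‖₊ : ℝ≥0∞)) ^ p)
            + ∫⁻ t in Ioc 0 (T - h), (∫⁻ s in Ioc 0 T, Ktwo (t, s) * (‖v s‖₊ : ℝ≥0∞)) ^ p) := by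
          rw [lintegral_const_mul' _ _
            (ENNReal.rpow_ne_top_of_nonneg hp0.le ENNReal.ofNat_ne_top),
            lintegral_add_left (hG1meas.pow_const p)]
      _ ≤ 2 ^ p * ((A1 ^ (p - 1) * (A1 * Ve)) + (A2 ^ (p - 1) * (A2 * Ve))) := by
          refine mul_le_mul_right (add_le_add ?_ ?_) _
          · exact schur hK1m hvE hSm hUm hp hA1top row1 col1
          · exact schur hK2m hvE hSm hUm hp hA2top row2 col2
      _ = 2 ^ p * (A1 ^ p + A2 ^ p) * Ve := by
          have e1 : A1 ^ (p - 1) * (A1 * Ve) = A1 ^ p * Ve := by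
            rw [← mul_assoc, rpow_sub_one_mul hA1top hp]
          have e2 : A2 ^ (p - 1) * (A2 * Ve) = A2 ^ p * Ve := by
            rw [← mul_assoc, rpow_sub_one_mul hA2top hp]
          rw [e1, e2]
          ring
  -- measurability of the convolution difference
  have hFm : Measurable fun z : ℝ × ℝ => Set.indicator {z : ℝ × ℝ | 0 < z.2 ∧ z.2 ≤ z.1}
      (fun z => l (z.1 - z.2) * v z.2) z :=
    ((hlm.comp (measurable_fst.sub measurable_snd)).mul
      (hvm.comp measurable_snd)).indicator hmeas_set1
  set Phi : ℝ → ℝ := fun t => ∫ s, Set.indicator {z : ℝ × ℝ | 0 < z.2 ∧ z.2 ≤ z.1}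
    (fun z => l (z.1 - z.2) * v z.2) (t, s) ∂(volume.restrict (Ioc 0 T)) with hPhidef
  have hPhim : StronglyMeasurable Phi := hFm.stronglyMeasurable.integral_prod_right'
  have hconv_eq : ∀ t : ℝ, t ≤ T → hconv l v t = Phi t := by
    intro t htT
    rw [hPhidef]
    calc hconv l v t = ∫ s in Ioc 0 t, l (t - s) * v s := rfl
      _ = ∫ s in Ioc 0 T ∩ Ioc 0 t, l (t - s) * v s := by
          rw [inter_eq_right.mpr (Ioc_subset_Ioc_right htT)]
      _ = ∫ s in Ioc 0 T, (Ioc 0 t).indicator (fun s => l (t - s) * v s) s := by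
          rw [setIntegral_indicator measurableSet_Ioc]
      _ = ∫ s in Ioc 0 T, Set.indicator {z : ℝ × ℝ | 0 < z.2 ∧ z.2 ≤ z.1}
            (fun z => l (z.1 - z.2) * v z.2) (t, s) := by
          refine integral_congr_ae (Filter.Eventually.of_forall fun s => ?_)
          simp only [Set.indicator_apply, Set.mem_setOf_eq, Set.mem_Ioc]
  have hDaesm : AEStronglyMeasurable (fun t => hconv l v (t + h) - hconv l v t)
      (volume.restrict (Ioc 0 (T - h))) := by
    have hg : Measurable fun t => Phi (t + h) - Phi t :=
      (hPhim.measurable.comp (measurable_add_const h)).sub hPhim.measurable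
    refine hg.aestronglyMeasurable.congr ?_
    refine (ae_restrict_iff' hSm).2 (Filter.Eventually.of_forall fun t ht => ?_)
    obtain ⟨h0t, htT⟩ := ht
    show Phi (t + h) - Phi t = hconv l v (t + h) - hconv l v t
    rw [hconv_eq (t + h) (by linarith), hconv_eq t (by linarith)]
  -- conversions between real and extended-real integrals
  have hLHSeq : ∫ t in Ioc 0 (T - h), |hconv l v (t + h) - hconv l v t| ^ p
      = (∫⁻ t in Ioc 0 (T - h), (‖hconv l v (t + h) - hconv l v t‖₊ : ℝ≥0∞) ^ p).toReal := by
    simp only [← Real.norm_eq_abs]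
    rw [integral_eq_lintegral_of_nonneg_ae
      (Filter.Eventually.of_forall fun t => Real.rpow_nonneg (norm_nonneg _) p)
      ((hDaesm.norm.aemeasurable.pow_const p).aestronglyMeasurable)]
    congr 1
    refine lintegral_congr fun t => ?_
    rw [← enorm_eq_nnnorm, ← ofReal_norm, ENNReal.ofReal_rpow_of_nonneg (norm_nonneg _) hp0.le]
  have hA1eq : ∫ t in Ioc 0 (T - h), |l (t + h) - l t| = A1.toReal := by
    have hnrm : Measurable fun t : ℝ => ‖l (t + h) - l t‖ :=
      ((hlm.comp (measurable_add_const h)).sub hlm).norm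
    simp only [← Real.norm_eq_abs]
    rw [integral_eq_lintegral_of_nonneg_ae
      (Filter.Eventually.of_forall fun t => norm_nonneg _)
      (hnrm.aestronglyMeasurable)]
    rw [hA1def]
    congr 1
    refine lintegral_congr fun t => ?_
    rw [ofReal_norm, enorm_eq_nnnorm]
  have hA2eq : ∫ s in Ioc 0 T, |Set.indicator (Set.Ioo 0 h) l s| = A2.toReal := by
    simp only [← Real.norm_eq_abs]
    rw [integral_eq_lintegral_of_nonneg_ae
      (Filter.Eventually.of_forall fun t => norm_nonneg _)
      ((hlm.indicator measurableSet_Ioo).norm.aestronglyMeasurable)]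
    have hlint : (∫⁻ s in Ioc 0 T, ENNReal.ofReal ‖(Ioo 0 h).indicator l s‖) = A2 := by
      calc ∫⁻ s in Ioc 0 T, ENNReal.ofReal ‖(Ioo 0 h).indicator l s‖
          = ∫⁻ s in Ioc 0 T, (Ioo 0 h).indicator (fun s => (‖l s‖₊ : ℝ≥0∞)) s := by
            refine lintegral_congr fun s => ?_
            by_cases hs : s ∈ Ioo (0:ℝ) h <;>
              simp [Set.indicator_apply, hs, ← enorm_eq_nnnorm, Real.enorm_eq_ofReal_abs]
        _ = ∫⁻ s in Ioo 0 h ∩ Ioc 0 T, (‖l s‖₊ : ℝ≥0∞) :=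
            lint_indicator_restrict measurableSet_Ioo _
        _ = A2 := by rw [inter_eq_left.mpr hIooU, hA2def]
    rw [hlint]
  have hVeq : ∫ t in Ioc 0 T, |v t| ^ p = Ve.toReal := by
    simp only [← Real.norm_eq_abs]
    rw [integral_eq_lintegral_of_nonneg_ae
      (Filter.Eventually.of_forall fun t => Real.rpow_nonneg (norm_nonneg _) p)
      ((hvm.norm.pow_const p).aestronglyMeasurable)]
    rw [hVedef]
    congr 1
    refine lintegral_congr fun t => ?_
    rw [← enorm_eq_nnnorm, ← ofReal_norm, ENNReal.ofReal_rpow_of_nonneg (norm_nonneg _) hp0.le]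
  -- conclusion
  rw [hLHSeq, hA1eq, hA2eq, hVeq]
  have hRne : 2 ^ p * (A1 ^ p + A2 ^ p) * Ve ≠ ∞ := by
    apply ENNReal.mul_ne_top (ENNReal.mul_ne_top ?_ ?_) hVe
    · exact ENNReal.rpow_ne_top_of_nonneg hp0.le ENNReal.ofNat_ne_top
    · exact ENNReal.add_ne_top.2 ⟨ENNReal.rpow_ne_top_of_nonneg hp0.le hA1top,
        ENNReal.rpow_ne_top_of_nonneg hp0.le hA2top⟩
  calc (∫⁻ t in Ioc 0 (T - h), (‖hconv l v (t + h) - hconv l v t‖₊ : ℝ≥0∞) ^ p).toReal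
      ≤ (2 ^ p * (A1 ^ p + A2 ^ p) * Ve).toReal := ENNReal.toReal_mono hRne main
    _ = 2 ^ p * (A1.toReal ^ p + A2.toReal ^ p) * Ve.toReal := by
        rw [ENNReal.toReal_mul, ENNReal.toReal_mul,
          ENNReal.toReal_add (ENNReal.rpow_ne_top_of_nonneg hp0.le hA1top)
            (ENNReal.rpow_ne_top_of_nonneg hp0.le hA2top),
          ← ENNReal.toReal_rpow, ← ENNReal.toReal_rpow, ← ENNReal.toReal_rpow]
        norm_num
end Stmt1Helpers

/-- the key translation estimate: for `l ∈ L¹((0,T))`, `v ∈ L_p((0,T))`,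
`1 ≤ p < ∞` and `0 < h < T`,
`∫₀^{T−h} |(l∗v)(t+h) − (l∗v)(t)|^p dt
  ≤ 2^p ( ‖τ_h l − l‖_{L¹((0,T−h))}^p + ‖χ_{(0,h)} l‖_{L¹((0,T))}^p ) ‖v‖_{L_p((0,T))}^p`. -/
theorem stmt1
    (T h p : ℝ) (hT : 0 < T) (hh : 0 < h) (hhT : h < T) (hp : 1 ≤ p)
    (l v : ℝ → ℝ)
    (hl : IntegrableOn l (Set.Ioc 0 T))
    (hv : MemLp v (ENNReal.ofReal p) (volume.restrict (Set.Ioc 0 T))) :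
    ∫ t in Set.Ioc 0 (T - h), |hconv l v (t + h) - hconv l v t| ^ p
      ≤ 2 ^ p *
        ((∫ t in Set.Ioc 0 (T - h), |l (t + h) - l t|) ^ p
          + (∫ s in Set.Ioc 0 T, |Set.indicator (Set.Ioo 0 h) l s|) ^ p) *
        (∫ t in Set.Ioc 0 T, |v t| ^ p) := by
  classical
  have hUm : MeasurableSet (Ioc (0:ℝ) T) := measurableSet_Ioc
  have hSm : MeasurableSet (Ioc (0:ℝ) (T - h)) := measurableSet_Ioc
  set l' : ℝ → ℝ := (Ioc 0 T).indicator (hl.1.mk l) with hl'def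
  set v' : ℝ → ℝ := (Ioc 0 T).indicator (hv.1.mk v) with hv'def
  have hl'm : Measurable l' := hl.1.stronglyMeasurable_mk.measurable.indicator hUm
  have hv'm : Measurable v' := hv.1.stronglyMeasurable_mk.measurable.indicator hUm
  -- a.e. agreement on (0, T]
  have hlae : ∀ᵐ x ∂volume, x ∈ Ioc 0 T → l x = l' x := by
    have h1 := (ae_restrict_iff' hUm).1 hl.1.ae_eq_mk
    filter_upwards [h1] with x hx hmem
    rw [hx hmem, hl'def]
    exact (Set.indicator_of_mem hmem _).symm
  have hvae : ∀ᵐ x ∂volume, x ∈ Ioc 0 T → v x = v' x := by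
    have h1 := (ae_restrict_iff' hUm).1 hv.1.ae_eq_mk
    filter_upwards [h1] with x hx hmem
    rw [hx hmem, hv'def]
    exact (Set.indicator_of_mem hmem _).symm
  have hlres : l =ᵐ[volume.restrict (Ioc 0 T)] l' := (ae_restrict_iff' hUm).2 hlae
  have hvres : v =ᵐ[volume.restrict (Ioc 0 T)] v' := (ae_restrict_iff' hUm).2 hvae
  have hl' : IntegrableOn l' (Set.Ioc 0 T) := hl.congr hlres
  have hv' : MemLp v' (ENNReal.ofReal p) (volume.restrict (Set.Ioc 0 T)) := hv.ae_eq hvres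
  -- the convolutions agree everywhere up to time T
  have hconv_congr : ∀ τ : ℝ, τ ≤ T → hconv l' v' τ = hconv l v τ := by
    intro τ hτ
    refine setIntegral_congr_ae measurableSet_Ioc ?_
    have hE : volume {x : ℝ | ¬ (x ∈ Ioc 0 T → l x = l' x)} = 0 := ae_iff.mp hlae
    have hq : Measure.QuasiMeasurePreserving (fun s : ℝ => τ - s) volume volume :=
      (Measure.measurePreserving_sub_left volume τ).quasiMeasurePreserving
    have h2 : ∀ᵐ s ∂volume, (τ - s ∈ Ioc 0 T → l (τ - s) = l' (τ - s)) :=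
      ae_iff.mpr (hq.preimage_null hE)
    have h3 : ∀ᵐ s : ℝ ∂volume, s ≠ τ := by
      have hset : ({τ} : Set ℝ) = {s : ℝ | ¬ s ≠ τ} := by ext x; simp
      rw [ae_iff, ← hset]
      exact measure_singleton τ
    filter_upwards [hvae, h2, h3] with s hs1 hs2 hs3 hmem
    obtain ⟨h0s, hsτ⟩ := hmem
    have hsτ' : s < τ := lt_of_le_of_ne hsτ hs3
    have hveq : v s = v' s := hs1 ⟨h0s, le_trans hsτ hτ⟩
    have hleq : l (τ - s) = l' (τ - s) := hs2 ⟨by linarith, by linarith⟩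
    rw [hveq, hleq]
  -- transfer the four integrals
  have hLHS : ∫ t in Set.Ioc 0 (T - h), |hconv l' v' (t + h) - hconv l' v' t| ^ p
      = ∫ t in Set.Ioc 0 (T - h), |hconv l v (t + h) - hconv l v t| ^ p := by
    refine setIntegral_congr_ae hSm (Filter.Eventually.of_forall fun t ht => ?_)
    obtain ⟨h0t, htT⟩ := ht
    rw [hconv_congr (t + h) (by linarith), hconv_congr t (by linarith)]
  have hA1 : ∫ t in Set.Ioc 0 (T - h), |l' (t + h) - l' t|
      = ∫ t in Set.Ioc 0 (T - h), |l (t + h) - l t| := by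
    refine setIntegral_congr_ae hSm ?_
    have hE : volume {x : ℝ | ¬ (x ∈ Ioc 0 T → l x = l' x)} = 0 := ae_iff.mp hlae
    have hq : Measure.QuasiMeasurePreserving (fun t : ℝ => t + h) volume volume :=
      (measurePreserving_add_right volume h).quasiMeasurePreserving
    have h2 : ∀ᵐ t ∂volume, (t + h ∈ Ioc 0 T → l (t + h) = l' (t + h)) :=
      ae_iff.mpr (hq.preimage_null hE)
    filter_upwards [hlae, h2] with t h1 h2' hmem
    obtain ⟨h0t, htT⟩ := hmem
    rw [h1 ⟨h0t, by linarith⟩, h2' ⟨by linarith, by linarith⟩]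
  have hA2 : ∫ s in Set.Ioc 0 T, |Set.indicator (Set.Ioo 0 h) l' s|
      = ∫ s in Set.Ioc 0 T, |Set.indicator (Set.Ioo 0 h) l s| := by
    refine setIntegral_congr_ae hUm ?_
    filter_upwards [hlae] with s h1 hmem
    by_cases hs : s ∈ Ioo (0:ℝ) h
    · rw [Set.indicator_of_mem hs, Set.indicator_of_mem hs, h1 hmem]
    · rw [Set.indicator_of_notMem hs, Set.indicator_of_notMem hs]
  have hV : ∫ t in Set.Ioc 0 T, |v' t| ^ p = ∫ t in Set.Ioc 0 T, |v t| ^ p := by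
    refine setIntegral_congr_ae hUm ?_
    filter_upwards [hvae] with t h1 hmem
    rw [h1 hmem]
  rw [← hLHS, ← hA1, ← hA2, ← hV]
  exact Stmt1Helpers.stmt1_meas T h p hT hh hhT hp l' v' hl'm hv'm hl' hv'
end

section
/- Let k ∈ H¹₁((0,T)) (i.e., k is absolutely continuous with integrable derivative on (0,T)) be nonnegative and nonincreasing, let H : ℝ → ℝ be convex and C¹, let u₀ ∈ ℝ, and let u ∈ L^∞((0,T)). Then for almost every t ∈ (0,T): H'(u(t)) · d/dt ( ∫₀ᵗ k(t−s)(u(s)−u₀) ds ) ≥ d/dt ( ∫₀ᵗ k(t−s)(H(u(s))−H(u₀)) ds ). -/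
open MeasureTheory Set
open Filter Topology

section FTC

lemma ae_ftc (f : ℝ → ℝ) (hf : Integrable f) :
    ∀ᵐ x ∂(volume : Measure ℝ), HasDerivAt (fun y => ∫ s in (0:ℝ)..y, f s) (f x) x := by
  filter_upwards [IsUnifLocDoublingMeasure.ae_tendsto_average_norm_sub volume
    hf.locallyIntegrable 1] with x hx
  have hδ : Tendsto (fun y : ℝ => |y - x|) (𝓝[≠] x) (𝓝[>] 0) := by
    apply tendsto_nhdsWithin_of_tendsto_nhds_of_eventually_within
    · have : Tendsto (fun y : ℝ => |y - x|) (𝓝 x) (𝓝 |x - x|) :=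
        (continuous_abs.comp (continuous_id.sub continuous_const)).tendsto x
      simpa using this.mono_left nhdsWithin_le_nhds
    · filter_upwards [self_mem_nhdsWithin] with y hy
      exact abs_pos.2 (sub_ne_zero.2 hy)
  have hball : ∀ᶠ y in 𝓝[≠] x, x ∈ Metric.closedBall x (1 * |y - x|) := by
    filter_upwards with y
    simp [Metric.mem_closedBall, abs_nonneg]
  have havg : Tendsto (fun y => ⨍ z in Metric.closedBall x |y - x|, ‖f z - f x‖)
      (𝓝[≠] x) (𝓝 0) := hx (fun _ => x) (fun y => |y - x|) hδ hball
  rw [hasDerivAt_iff_tendsto]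
  have key : ∀ y : ℝ, y ≠ x →
      ‖y - x‖⁻¹ * ‖(∫ s in (0:ℝ)..y, f s) - (∫ s in (0:ℝ)..x, f s) - (y - x) • f x‖
        ≤ 2 * ⨍ z in Metric.closedBall x |y - x|, ‖f z - f x‖ := by
    intro y hy
    have hii : ∀ a b : ℝ, IntervalIntegrable f volume a b := fun a b => hf.intervalIntegrable
    have h1 : (∫ s in (0:ℝ)..y, f s) - (∫ s in (0:ℝ)..x, f s) = ∫ s in x..y, f s := by
      rw [← intervalIntegral.integral_add_adjacent_intervals (hii 0 x) (hii x y)]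
      ring_nf
    have h2 : (y - x) • f x = ∫ s in x..y, f x := by
      rw [intervalIntegral.integral_const]
    have h3 : (∫ s in (0:ℝ)..y, f s) - (∫ s in (0:ℝ)..x, f s) - (y - x) • f x
        = ∫ s in x..y, (f s - f x) := by
      rw [h1, h2, intervalIntegral.integral_sub (hii x y) intervalIntegrable_const]
    have hint : IntegrableOn (fun z => ‖f z - f x‖) (Metric.closedBall x |y - x|) :=
      (hf.integrableOn.sub (integrableOn_const (by
        simp [Real.volume_closedBall, ENNReal.mul_eq_top] ))).norm
    have h4 : ‖∫ s in x..y, (f s - f x)‖ ≤ ∫ z in Metric.closedBall x |y - x|, ‖f z - f x‖ := by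
      refine (intervalIntegral.norm_integral_le_integral_norm_uIoc).trans ?_
      apply setIntegral_mono_set hint
      · filter_upwards with z using norm_nonneg _
      · apply HasSubset.Subset.eventuallyLE
        intro z hz
        rw [Set.uIoc_eq_union] at hz
        simp only [Metric.mem_closedBall, Real.dist_eq]
        rcases hz with ⟨h5, h6⟩ | ⟨h5, h6⟩ <;>
        · rw [abs_le]
          exact ⟨by nlinarith [le_abs_self (y - x), neg_abs_le (y - x), abs_nonneg (y - x)],
            by nlinarith [le_abs_self (y - x), neg_abs_le (y - x), abs_nonneg (y - x)]⟩
    have hvol : (volume (Metric.closedBall x |y - x|)).toReal = 2 * |y - x| := by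
      rw [Real.volume_closedBall, ENNReal.toReal_ofReal (by positivity)]
    have h5 : ∫ z in Metric.closedBall x |y - x|, ‖f z - f x‖
        = 2 * |y - x| * ⨍ z in Metric.closedBall x |y - x|, ‖f z - f x‖ := by
      have hyx : (0:ℝ) < |y - x| := abs_pos.2 (sub_ne_zero.2 hy)
      rw [setAverage_eq, smul_eq_mul, measureReal_def, hvol, ← mul_assoc]
      rw [mul_inv_cancel₀ (by positivity), one_mul]
    have hyx : (0:ℝ) < |y - x| := abs_pos.2 (sub_ne_zero.2 hy)
    rw [h3]
    calc ‖y - x‖⁻¹ * ‖∫ s in x..y, (f s - f x)‖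
        ≤ ‖y - x‖⁻¹ * (2 * |y - x| * ⨍ z in Metric.closedBall x |y - x|, ‖f z - f x‖) := by
          apply mul_le_mul_of_nonneg_left _ (by positivity)
          rw [← h5]; exact h4
      _ = 2 * ⨍ z in Metric.closedBall x |y - x|, ‖f z - f x‖ := by
          rw [Real.norm_eq_abs]
          field_simp
  -- combine
  have htend : Tendsto (fun y => ‖y - x‖⁻¹ *
      ‖(∫ s in (0:ℝ)..y, f s) - (∫ s in (0:ℝ)..x, f s) - (y - x) • f x‖) (𝓝[≠] x) (𝓝 0) := by
    have h2 : Tendsto (fun y => 2 * ⨍ z in Metric.closedBall x |y - x|, ‖f z - f x‖)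
        (𝓝[≠] x) (𝓝 0) := by
      simpa using havg.const_mul 2
    apply squeeze_zero' _ _ h2
    · filter_upwards with y using by positivity
    · filter_upwards [self_mem_nhdsWithin] with y hy using key y hy
  rw [← nhdsNE_sup_pure x]
  rw [tendsto_sup]
  refine ⟨htend, ?_⟩
  have := tendsto_pure_nhds (fun y => ‖y - x‖⁻¹ *
      ‖(∫ s in (0:ℝ)..y, f s) - (∫ s in (0:ℝ)..x, f s) - (y - x) • f x‖) x
  simpa using this

end FTC

lemma tangent_le (H : ℝ → ℝ) (hH : ContDiff ℝ 1 H) (hHconv : ConvexOn ℝ Set.univ H)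
    (a x : ℝ) : H a + deriv H a * (x - a) ≤ H x := by
  have hd : DifferentiableAt ℝ H a := (hH.differentiable one_ne_zero).differentiableAt
  rcases lt_trichotomy x a with h | h | h
  · have h2 := hHconv.slope_le_deriv (mem_univ x) (mem_univ a) h hd
    rw [slope_def_field] at h2
    rw [div_le_iff₀ (by linarith : (0:ℝ) < a - x)] at h2
    nlinarith
  · simp [h]
  · have h2 := hHconv.deriv_le_slope (mem_univ a) (mem_univ x) h hd
    rw [slope_def_field] at h2
    rw [le_div_iff₀ (by linarith : (0:ℝ) < x - a)] at h2
    nlinarith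

lemma ae_comp_sub_left {p : ℝ → Prop} (hp : MeasurableSet {x | p x}) (t : ℝ)
    (h : ∀ᵐ x ∂(volume : Measure ℝ), p x) : ∀ᵐ s ∂(volume : Measure ℝ), p (t - s) := by
  rw [ae_iff] at h ⊢
  have h2 := (Measure.measurePreserving_sub_left (volume : Measure ℝ) t).measure_preimage
    (hp.compl.nullMeasurableSet)
  have h3 : {s : ℝ | ¬ p (t - s)} = (fun s => t - s) ⁻¹' {x | p x}ᶜ := rfl
  rw [h3, h2]
  exact h

lemma q_nonpos (T : ℝ) (hT : 0 < T) (q k : ℝ → ℝ) (hqi : Integrable q volume)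
    (hqz : ∀ x, x ∉ Ioc 0 T → q x = 0)
    (hk : ∀ t ∈ Icc 0 T, k t = k 0 + ∫ s in Ioc 0 t, q s)
    (hkmono : AntitoneOn k (Icc 0 T)) :
    ∀ᵐ x ∂(volume : Measure ℝ), q x ≤ 0 := by
  have hne : ∀ᵐ x ∂(volume : Measure ℝ), x ≠ T := by
    rw [ae_iff]
    have : {x : ℝ | ¬ x ≠ T} = {T} := by ext z; simp
    rw [this, Real.volume_singleton]
  filter_upwards [ae_ftc q hqi, hne] with x hd hxT
  by_cases hx : x ∈ Ioo 0 T
  · -- slope argument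
    set P : ℝ → ℝ := fun y => ∫ s in (0:ℝ)..y, q s with hP
    have hK : ∀ y ∈ Icc 0 T, k 0 + P y = k y := by
      intro y hy
      rw [hk y hy, hP]
      simp only
      rw [intervalIntegral.integral_of_le hy.1]
    have hslope : Tendsto (slope P x) (𝓝[≠] x) (𝓝 (q x)) :=
      hasDerivAt_iff_tendsto_slope.1 hd
    have hmono : 𝓝[Ioo x T] x ≤ 𝓝[≠] x :=
      nhdsWithin_mono x (fun y hy => ne_of_gt hy.1)
    have hne2 : (𝓝[Ioo x T] x).NeBot := by
      apply mem_closure_iff_nhdsWithin_neBot.1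
      rw [closure_Ioo (ne_of_lt hx.2)]
      exact ⟨le_rfl, hx.2.le⟩
    have hev : ∀ᶠ y in 𝓝[Ioo x T] x, slope P x y ≤ 0 := by
      filter_upwards [self_mem_nhdsWithin] with y hy
      have hxI : x ∈ Icc 0 T := ⟨hx.1.le, hx.2.le⟩
      have hyI : y ∈ Icc 0 T := ⟨(hx.1.trans hy.1).le, hy.2.le⟩
      rw [slope_def_field]
      have h1 : P y - P x = k y - k x := by
        have e1 := hK x hxI
        have e2 := hK y hyI
        linarith
      rw [div_eq_mul_inv]
      apply mul_nonpos_of_nonpos_of_nonneg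
      · have := hkmono hxI hyI hy.1.le
        linarith
      · rw [inv_nonneg]
        linarith [hy.1]
    exact le_of_tendsto (hslope.mono_left hmono) hev
  · have : x ∉ Ioc 0 T := by
      intro hmem
      exact hx ⟨hmem.1, lt_of_le_of_ne hmem.2 hxT⟩
    rw [hqz x this]

lemma key_hasDeriv (T : ℝ) (hT : 0 < T) (q : ℝ → ℝ) (hqm : Measurable q)
    (hqi : Integrable q volume)
    (v : ℝ → ℝ) (hvm : Measurable v) (C : ℝ) (hC0 : 0 ≤ C)
    (hvb : ∀ᵐ s ∂(volume.restrict (Ioc 0 T)), |v s| ≤ C)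
    (k : ℝ → ℝ) (hk : ∀ t ∈ Icc 0 T, k t = k 0 + ∫ s in Ioc 0 t, q s) :
    ∀ᵐ t ∂(volume.restrict (Ioc 0 T)),
      HasDerivAt (fun τ => hconv k v τ) (k 0 * v t + hconv q v t) t := by
  set P : ℝ → ℝ := fun y => ∫ s in (0:ℝ)..y, q s with hPdef
  have hPc : Continuous P := intervalIntegral.continuous_primitive
    (fun a b => hqi.intervalIntegrable) 0
  have hPb : ∀ x, |P x| ≤ ∫ r, |q r| := by
    intro x
    calc |P x| = ‖∫ s in (0:ℝ)..x, q s‖ := (Real.norm_eq_abs _).symm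
      _ ≤ ∫ s in Set.uIoc 0 x, ‖q s‖ := intervalIntegral.norm_integral_le_integral_norm_uIoc
      _ ≤ ∫ r, |q r| := by
          apply setIntegral_le_integral hqi.norm
          filter_upwards with r using abs_nonneg _
  have hvb' : ∀ t, t ≤ T → ∀ᵐ s ∂(volume.restrict (Ioc 0 t)), |v s| ≤ C := by
    intro t htT
    exact ae_mono (Measure.restrict_mono (Ioc_subset_Ioc le_rfl htT) le_rfl) hvb
  have hvi : ∀ t, t ≤ T → IntegrableOn v (Ioc 0 t) := by
    intro t htT
    refine Integrable.mono' (g := fun _ => C)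
      (integrableOn_const measure_Ioc_lt_top.ne) hvm.aestronglyMeasurable ?_
    filter_upwards [hvb' t htT] with s hs
    simpa using hs
  -- main representation
  have hrepr : ∀ t ∈ Icc 0 T, hconv k v t = (∫ τ in Ioc 0 t, (k 0 * v τ + hconv q v τ)) ∧
      IntegrableOn (fun τ => hconv q v τ) (Ioc 0 t) := by
    intro t ht
    obtain ⟨ht0, htT⟩ := ht
    set F : ℝ → ℝ → ℝ := fun τ s => if s ≤ τ then q (τ - s) * v s else 0 with hFdef
    have hFm : Measurable (Function.uncurry F) := by
      apply Measurable.ite (measurableSet_le measurable_snd measurable_fst)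
      · exact (hqm.comp (measurable_fst.sub measurable_snd)).mul (hvm.comp measurable_snd)
      · exact measurable_const
    have hFτm : ∀ τ, Measurable (F τ) := fun τ => hFm.comp (measurable_prodMk_left)
    have hqτ : ∀ τ : ℝ, IntegrableOn (fun s => q (τ - s)) (Ioc 0 t) :=
      fun τ => (hqi.comp_sub_left τ).integrableOn
    have hFbd : ∀ τ : ℝ, ∀ᵐ s ∂(volume.restrict (Ioc 0 t)),
        ‖F τ s‖ ≤ C * |q (τ - s)| := by
      intro τ
      filter_upwards [hvb' t htT] with s hs
      rw [hFdef]
      simp only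
      split_ifs with h
      · rw [Real.norm_eq_abs, abs_mul, mul_comm]
        exact mul_le_mul_of_nonneg_right hs (abs_nonneg _)
      · simp [mul_nonneg hC0 (abs_nonneg _)]
    have hFbd_int : ∀ τ : ℝ, IntegrableOn (fun s => C * |q (τ - s)|) (Ioc 0 t) :=
      fun τ => ((hqτ τ).norm.const_mul C)
    have hFsec : ∀ τ : ℝ, IntegrableOn (F τ) (Ioc 0 t) := by
      intro τ
      exact Integrable.mono' (hFbd_int τ) (hFτm τ).aestronglyMeasurable (hFbd τ)
    have hFnorm : ∀ τ : ℝ, (∫ s in Ioc 0 t, ‖F τ s‖) ≤ C * ∫ r, |q r| := by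
      intro τ
      calc (∫ s in Ioc 0 t, ‖F τ s‖) ≤ ∫ s in Ioc 0 t, C * |q (τ - s)| :=
            integral_mono_ae (hFsec τ).norm (hFbd_int τ) (hFbd τ)
        _ = C * ∫ s in Ioc 0 t, |q (τ - s)| := by rw [integral_const_mul]
        _ ≤ C * ∫ s, |q (τ - s)| := by
            apply mul_le_mul_of_nonneg_left _ hC0
            apply setIntegral_le_integral (hqi.comp_sub_left τ).norm
            filter_upwards with s using abs_nonneg _
        _ = C * ∫ r, |q r| := by rw [integral_sub_left_eq_self (fun r => |q r|) volume τ]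
    set μt := volume.restrict (Ioc 0 t) with hμt
    have hFI : Integrable (Function.uncurry F) (μt.prod μt) := by
      rw [integrable_prod_iff hFm.aestronglyMeasurable]
      constructor
      · filter_upwards with τ
        exact hFsec τ
      · refine Integrable.mono' (g := fun _ => C * ∫ r, |q r|)
          (integrableOn_const measure_Ioc_lt_top.ne)
          (hFm.aestronglyMeasurable.norm.integral_prod_right') ?_
        filter_upwards with τ
        rw [Real.norm_eq_abs, abs_of_nonneg (integral_nonneg (fun s => norm_nonneg _))]
        exact hFnorm τ
    have hswap : (∫ τ, ∫ s, F τ s ∂μt ∂μt) = ∫ s, ∫ τ, F τ s ∂μt ∂μt :=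
      integral_integral_swap hFI
    have hinner1 : ∀ τ ∈ Ioc 0 t, (∫ s, F τ s ∂μt) = hconv q v τ := by
      intro τ hτ
      have hind : F τ = (Iic τ).indicator (fun s => q (τ - s) * v s) := by
        funext s
        rw [hFdef]
        simp only [indicator, mem_Iic]
      rw [hμt, hind, setIntegral_indicator measurableSet_Iic]
      have : Ioc 0 t ∩ Iic τ = Ioc 0 τ := by
        ext z
        simp only [mem_inter_iff, mem_Ioc, mem_Iic]
        constructor
        · rintro ⟨⟨h1, _⟩, h3⟩; exact ⟨h1, h3⟩
        · rintro ⟨h1, h2⟩; exact ⟨⟨h1, h2.trans hτ.2⟩, h2⟩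
      rw [this]
      rfl
    have hinner2 : ∀ s ∈ Ioc 0 t, (∫ τ, F τ s ∂μt) = P (t - s) * v s := by
      intro s hs
      have hind : (fun τ => F τ s) = (Ici s).indicator (fun τ => q (τ - s) * v s) := by
        funext τ
        rw [hFdef]
        simp only [indicator, mem_Ici]
      rw [hμt, hind, setIntegral_indicator measurableSet_Ici]
      have hset : Ioc 0 t ∩ Ici s = Icc s t := by
        ext z
        simp only [mem_inter_iff, mem_Ioc, mem_Icc, mem_Ici]
        constructor
        · rintro ⟨⟨_, h2⟩, h3⟩; exact ⟨h3, h2⟩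
        · rintro ⟨h1, h2⟩; exact ⟨⟨lt_of_lt_of_le hs.1 h1, h2⟩, h1⟩
      rw [hset, integral_mul_const, integral_Icc_eq_integral_Ioc,
        ← intervalIntegral.integral_of_le hs.2]
      congr 1
      rw [intervalIntegral.integral_comp_sub_right q s, sub_self]
    have hPval : ∀ x : ℝ, 0 ≤ x → P x = ∫ s in Ioc 0 x, q s := by
      intro x hx
      rw [hPdef]
      simp only
      rw [intervalIntegral.integral_of_le hx]
    have hPvi : IntegrableOn (fun s => P (t - s) * v s) (Ioc 0 t) := by
      refine Integrable.mono' (g := fun _ => (∫ r, |q r|) * C)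
        (integrableOn_const measure_Ioc_lt_top.ne)
        (((hPc.measurable.comp (measurable_const.sub measurable_id)).mul
          hvm).aestronglyMeasurable) ?_
      filter_upwards [hvb' t htT] with s hs
      rw [Real.norm_eq_abs, abs_mul]
      apply mul_le_mul (hPb _) hs (abs_nonneg _)
      exact le_trans (abs_nonneg _) (hPb 0)
    have hsplit : hconv k v t = (∫ s in Ioc 0 t, k 0 * v s) + ∫ s in Ioc 0 t, P (t - s) * v s := by
      rw [show hconv k v t = ∫ s in Ioc 0 t, k (t - s) * v s from rfl,
        ← integral_add ((hvi t htT).const_mul (k 0)) hPvi]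
      apply setIntegral_congr_fun measurableSet_Ioc
      intro s hs
      have hts : t - s ∈ Icc 0 T := ⟨by linarith [hs.2], by linarith [hs.1]⟩
      show k (t - s) * v s = k 0 * v s + P (t - s) * v s
      rw [hk (t - s) hts, ← hPval (t - s) hts.1]
      ring
    have hIconv : IntegrableOn (fun τ => hconv q v τ) (Ioc 0 t) := by
      have h1 : Integrable (fun τ => ∫ s, F τ s ∂μt) μt := hFI.integral_prod_left
      apply h1.congr
      filter_upwards [ae_restrict_mem measurableSet_Ioc] with τ hτ
      exact hinner1 τ hτ
    refine ⟨?_, hIconv⟩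
    have h2 : (∫ s in Ioc 0 t, P (t - s) * v s) = ∫ τ in Ioc 0 t, hconv q v τ := by
      rw [show (∫ s in Ioc 0 t, P (t - s) * v s) = ∫ s, (∫ τ, F τ s ∂μt) ∂μt from ?_,
        ← hswap]
      · apply setIntegral_congr_ae measurableSet_Ioc
        filter_upwards with τ hτ
        exact hinner1 τ hτ
      · symm
        apply setIntegral_congr_ae measurableSet_Ioc
        filter_upwards with s hs
        exact hinner2 s hs
    rw [hsplit, h2, ← integral_add ((hvi t htT).const_mul (k 0)) hIconv]
  -- now transfer to derivative statement
  set g : ℝ → ℝ := fun τ => k 0 * v τ + hconv q v τ with hgdef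
  have hgi : IntegrableOn g (Ioc 0 T) :=
    ((hvi T le_rfl).const_mul (k 0)).add (hrepr T ⟨le_rfl.trans hT.le, le_rfl⟩).2
  have hgint : Integrable ((Ioc 0 T).indicator g) volume :=
    hgi.integrable_indicator measurableSet_Ioc
  have hne : ∀ᵐ x ∂(volume.restrict (Ioc 0 T)), x ≠ T := by
    apply ae_restrict_of_ae
    rw [ae_iff]
    have : {x : ℝ | ¬ x ≠ T} = {T} := by ext z; simp
    rw [this, Real.volume_singleton]
  filter_upwards [ae_restrict_of_ae (ae_ftc _ hgint), ae_restrict_mem measurableSet_Ioc, hne]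
    with x hd hmem hxT
  have hxo : x ∈ Ioo 0 T := ⟨hmem.1, lt_of_le_of_ne hmem.2 hxT⟩
  have heq : (fun τ => hconv k v τ) =ᶠ[𝓝 x] (fun y => ∫ s in (0:ℝ)..y, (Ioc 0 T).indicator g s) := by
    filter_upwards [isOpen_Ioo.mem_nhds hxo] with y hy
    rw [intervalIntegral.integral_of_le hy.1.le, setIntegral_indicator measurableSet_Ioc,
      inter_eq_self_of_subset_left (Ioc_subset_Ioc le_rfl hy.2.le)]
    exact (hrepr y ⟨hy.1.le, hy.2.le⟩).1
  have hd2 := hd.congr_of_eventuallyEq heq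
  have : (Ioc 0 T).indicator g x = k 0 * v x + hconv q v x := by
    rw [indicator_of_mem hmem, hgdef]
  rwa [this] at hd2

/-- fundamental convexity inequality: for `k ∈ H¹₁((0,T))` nonnegative and
nonincreasing, `H` convex and `C¹`, `u₀ ∈ ℝ`, `u ∈ L^∞((0,T))` measurable, for a.e.
`t ∈ (0,T)`:
`H'(u(t)) ∂ₜ(k∗[u−u₀])(t) ≥ ∂ₜ(k∗[H(u)−H(u₀)])(t)`. -/
theorem stmt3
    (T : ℝ) (hT : 0 < T)
    (k k' : ℝ → ℝ)
    (hk' : IntegrableOn k' (Set.Ioc 0 T))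
    (hkH11 : ∀ t ∈ Set.Icc 0 T, k t = k 0 + ∫ s in Set.Ioc 0 t, k' s)
    (hknn : ∀ t ∈ Set.Icc 0 T, 0 ≤ k t)
    (hkmono : AntitoneOn k (Set.Icc 0 T))
    (H : ℝ → ℝ) (hH : ContDiff ℝ 1 H) (hHconv : ConvexOn ℝ Set.univ H)
    (u₀ : ℝ) (u : ℝ → ℝ) (hum : Measurable u)
    (hubd : ∃ C, ∀ᵐ t ∂(volume.restrict (Set.Ioc 0 T)), |u t| ≤ C) :
    ∀ᵐ t ∂(volume.restrict (Set.Ioc 0 T)),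
      deriv (fun τ => hconv k (fun s => H (u s) - H u₀) τ) t
        ≤ deriv H (u t) * deriv (fun τ => hconv k (fun s => u s - u₀) τ) t := by
  obtain ⟨C₀, hC₀⟩ := hubd
  set C : ℝ := max C₀ 0 with hCdef
  have hC : ∀ᵐ t ∂(volume.restrict (Set.Ioc 0 T)), |u t| ≤ C := by
    filter_upwards [hC₀] with t h using h.trans (le_max_left _ _)
  have hC0 : (0:ℝ) ≤ C := le_max_right _ _
  -- measurable representative of k'
  set km : ℝ → ℝ := (hk'.aestronglyMeasurable).mk k' with hkmdef
  have hkmm : Measurable km := (hk'.aestronglyMeasurable.stronglyMeasurable_mk).measurable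
  have hkeq : k' =ᵐ[volume.restrict (Ioc 0 T)] km := hk'.aestronglyMeasurable.ae_eq_mk
  set q : ℝ → ℝ := (Ioc 0 T).indicator km with hqdef
  have hqm : Measurable q := hkmm.indicator measurableSet_Ioc
  have hkmi : IntegrableOn km (Ioc 0 T) := hk'.congr hkeq
  have hqi : Integrable q volume := hkmi.integrable_indicator measurableSet_Ioc
  have hqint_eq : ∀ t, t ≤ T → (∫ s in Ioc 0 t, q s) = ∫ s in Ioc 0 t, k' s := by
    intro t htT
    rw [hqdef]
    rw [setIntegral_indicator measurableSet_Ioc,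
      inter_eq_self_of_subset_left (Ioc_subset_Ioc le_rfl htT)]
    apply integral_congr_ae
    exact hkeq.symm.filter_mono (ae_mono (Measure.restrict_mono (Ioc_subset_Ioc le_rfl htT) le_rfl))
  have hkq : ∀ t ∈ Icc 0 T, k t = k 0 + ∫ s in Ioc 0 t, q s := by
    intro t ht
    rw [hqint_eq t ht.2]
    exact hkH11 t ht
  have hqz : ∀ x, x ∉ Ioc 0 T → q x = 0 := fun x hx => indicator_of_notMem hx km
  have hqneg : ∀ᵐ x ∂(volume : Measure ℝ), q x ≤ 0 := q_nonpos T hT q k hqi hqz hkq hkmono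
  have hqnegs : ∀ t : ℝ, ∀ᵐ s ∂(volume : Measure ℝ), q (t - s) ≤ 0 := by
    intro t
    apply ae_comp_sub_left _ t hqneg
    exact measurableSet_le hqm measurable_const
  -- the two integrands
  have hvUm : Measurable (fun s => u s - u₀) := hum.sub measurable_const
  have hvHm : Measurable (fun s => H (u s) - H u₀) :=
    ((hH.continuous.measurable).comp hum).sub measurable_const
  obtain ⟨M, hM⟩ := (isCompact_Icc : IsCompact (Icc (-C) C)).exists_bound_of_continuousOn
    hH.continuous.continuousOn
  have hM0 : 0 ≤ M := le_trans (norm_nonneg (H 0)) (hM 0 ⟨neg_nonpos.2 hC0, hC0⟩)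
  have hvUb : ∀ᵐ s ∂(volume.restrict (Set.Ioc 0 T)), |u s - u₀| ≤ C + |u₀| := by
    filter_upwards [hC] with s hs
    calc |u s - u₀| ≤ |u s| + |u₀| := abs_sub _ _
      _ ≤ C + |u₀| := by linarith
  have hvHb : ∀ᵐ s ∂(volume.restrict (Set.Ioc 0 T)), |H (u s) - H u₀| ≤ M + |H u₀| := by
    filter_upwards [hC] with s hs
    have h1 : u s ∈ Icc (-C) C := by
      rw [mem_Icc]; exact abs_le.1 hs
    calc |H (u s) - H u₀| ≤ |H (u s)| + |H u₀| := abs_sub _ _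
      _ ≤ M + |H u₀| := by
          have := hM (u s) h1
          rw [Real.norm_eq_abs] at this
          linarith
  have keyU := key_hasDeriv T hT q hqm hqi (fun s => u s - u₀) hvUm (C + |u₀|)
    (add_nonneg hC0 (abs_nonneg _)) hvUb k hkq
  have keyH := key_hasDeriv T hT q hqm hqi (fun s => H (u s) - H u₀) hvHm (M + |H u₀|)
    (add_nonneg hM0 (abs_nonneg _)) hvHb k hkq
  filter_upwards [keyU, keyH, ae_restrict_mem measurableSet_Ioc] with t hdU hdH ht
  rw [hdU.deriv, hdH.deriv]
  -- now a pointwise inequality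
  set a : ℝ := u t with hadef
  set D : ℝ := deriv H a with hDdef
  set φ : ℝ → ℝ := fun x => H x - H a - D * (x - a) with hφdef
  have hφ : ∀ x, 0 ≤ φ x := by
    intro x
    have := tangent_le H hH hHconv a x
    rw [hφdef]
    simp only
    linarith
  have htI : t ∈ Icc 0 T := ⟨ht.1.le, ht.2⟩
  have hkt : 0 ≤ k t := hknn t htI
  -- integrability at t
  have hq1 : IntegrableOn (fun s => q (t - s)) (Ioc 0 t) := (hqi.comp_sub_left t).integrableOn
  have hbd : ∀ (w : ℝ → ℝ) (Cw : ℝ), Measurable w →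
      (∀ᵐ s ∂(volume.restrict (Ioc 0 T)), |w s| ≤ Cw) →
      IntegrableOn (fun s => q (t - s) * w s) (Ioc 0 t) := by
    intro w Cw hwm hwb
    refine Integrable.mono' (hq1.norm.mul_const Cw)
      (((hqm.comp (measurable_const.sub measurable_id)).mul hwm).aestronglyMeasurable) ?_
    have hwb' : ∀ᵐ s ∂(volume.restrict (Ioc 0 t)), |w s| ≤ Cw :=
      ae_mono (Measure.restrict_mono (Ioc_subset_Ioc le_rfl ht.2) le_rfl) hwb
    filter_upwards [hwb'] with s hs
    rw [Real.norm_eq_abs, abs_mul]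
    exact mul_le_mul_of_nonneg_left hs (abs_nonneg _)
  have hIU : IntegrableOn (fun s => q (t - s) * (u s - u₀)) (Ioc 0 t) :=
    hbd _ _ hvUm hvUb
  have hIH : IntegrableOn (fun s => q (t - s) * (H (u s) - H u₀)) (Ioc 0 t) :=
    hbd _ _ hvHm hvHb
  -- ∫ q(t-s) ds = k t - k 0
  have hIQ : (∫ s in Ioc 0 t, q (t - s)) = k t - k 0 := by
    rw [← intervalIntegral.integral_of_le ht.1.le,
      intervalIntegral.integral_comp_sub_left q t, sub_self, sub_zero,
      intervalIntegral.integral_of_le ht.1.le, hkq t htI]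
    ring
  -- pointwise identity
  have hptw : (fun s => q (t - s) * φ (u s)) = fun s =>
      q (t - s) * (H (u s) - H u₀) - D * (q (t - s) * (u s - u₀)) + φ u₀ * q (t - s) := by
    funext s
    rw [hφdef]
    simp only
    ring
  have hIφ : IntegrableOn (fun s => q (t - s) * φ (u s)) (Ioc 0 t) := by
    rw [hptw]
    exact (hIH.sub (hIU.const_mul D)).add (hq1.const_mul (φ u₀))
  have hDmul : Integrable (fun s => D * (q (t - s) * (u s - u₀)))
      (volume.restrict (Ioc 0 t)) := hIU.const_mul D
  have hsub : Integrable
      (fun s => q (t - s) * (H (u s) - H u₀) - D * (q (t - s) * (u s - u₀)))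
      (volume.restrict (Ioc 0 t)) := hIH.sub hDmul
  have hcm : Integrable (fun s => φ u₀ * q (t - s)) (volume.restrict (Ioc 0 t)) :=
    hq1.const_mul (φ u₀)
  have hEq : (∫ s in Ioc 0 t, q (t - s) * φ (u s))
      = (∫ s in Ioc 0 t, q (t - s) * (H (u s) - H u₀))
        - D * (∫ s in Ioc 0 t, q (t - s) * (u s - u₀)) + φ u₀ * (k t - k 0) := by
    rw [hptw, integral_add hsub hcm, integral_sub hIH hDmul,
      integral_const_mul, integral_const_mul, hIQ]
  have hneg : (∫ s in Ioc 0 t, q (t - s) * φ (u s)) ≤ 0 := by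
    apply integral_nonpos_of_ae
    filter_upwards [ae_restrict_of_ae (hqnegs t)] with s hs
    exact mul_nonpos_of_nonpos_of_nonneg hs (hφ (u s))
  have hDvU : D * (u t - u₀) - (H (u t) - H u₀) = φ u₀ := by
    rw [hφdef, ← hadef]
    simp only
    ring
  have hmul : 0 ≤ φ u₀ * k t := mul_nonneg (hφ u₀) hkt
  show k 0 * (H (u t) - H u₀) + hconv q (fun s => H (u s) - H u₀) t
    ≤ D * (k 0 * (u t - u₀) + hconv q (fun s => u s - u₀) t)
  have e1 : hconv q (fun s => H (u s) - H u₀) t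
      = ∫ s in Ioc 0 t, q (t - s) * (H (u s) - H u₀) := rfl
  have e2 : hconv q (fun s => u s - u₀) t = ∫ s in Ioc 0 t, q (t - s) * (u s - u₀) := rfl
  rw [e1, e2]
  have h6 : D * (k 0 * (u t - u₀)) = k 0 * (H (u t) - H u₀) + k 0 * φ u₀ := by
    linear_combination (k 0) * hDvU
  nlinarith [hEq, hneg, hmul, h6]
end
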